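/- arXiv:0709.3411 — 5 statements merged into one kernel-verified Lean document; each statement's English description precedes it below -/
import Mathlib

section
/- Let K ⊆ ℝ^Ω be a convex cone and K_b = {k ∈ K : the negative part k⁻ is bounded}. Then there exists a finitely additive probability m on the power set of Ω such that every k ∈ K_b is m-integrable and sup_{k ∈ K_b} m(k) ≤ 0, if and only if K contains no element k with k ≥ 1 pointwise. -/
open Filter Set

/-- A positive finitely additive set function on `2^Ω`. -/
structure FinAddMeasure (Ω : Type*) where
  μ : Set Ω → ℝ
  nonneg : ∀ E, 0 ≤ μ E
  empty : μ ∅ = 0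
  add : ∀ E F : Set Ω, Disjoint E F → μ (E ∪ F) = μ E + μ F

/-- A finitely additive probability on `2^Ω`. -/
structure FinAddProb (Ω : Type*) extends FinAddMeasure Ω where
  total : μ Set.univ = 1

/-- Lower (simple-function) sums for `f` relative to a set function `μ` defined
on the sets of the family `A`: sums `∑ aᵢ μ(Eᵢ)` with `aᵢ ≥ 0`, `Eᵢ ∈ A` and
`∑ aᵢ 1_{Eᵢ} ≤ f` pointwise. -/
def lowerSums {Ω : Type*} (A : Set (Set Ω)) (μ : Set Ω → ℝ) (f : Ω → ℝ) : Set ℝ :=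
  { r | ∃ (n : ℕ) (a : Fin n → ℝ) (E : Fin n → Set Ω),
      (∀ i, 0 ≤ a i) ∧ (∀ i, E i ∈ A) ∧
      (∀ ω, (∑ i, a i * (E i).indicator (fun _ => (1 : ℝ)) ω) ≤ f ω) ∧
      r = ∑ i, a i * μ (E i) }

/-- `f` is integrable with respect to `μ` (restricted to the family `A`):
the lower sums of the positive and of the negative part are bounded above. -/
def FAIntegrableOn {Ω : Type*} (A : Set (Set Ω)) (μ : Set Ω → ℝ) (f : Ω → ℝ) : Prop :=
  BddAbove (lowerSums A μ (fun ω => max (f ω) 0)) ∧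
  BddAbove (lowerSums A μ (fun ω => max (-(f ω)) 0))

/-- The finitely additive integral `μ(f) = μ(f⁺) - μ(f⁻)` obtained from lower sums. -/
noncomputable def faIntOn {Ω : Type*} (A : Set (Set Ω)) (μ : Set Ω → ℝ) (f : Ω → ℝ) : ℝ :=
  sSup (lowerSums A μ (fun ω => max (f ω) 0)) -
    sSup (lowerSums A μ (fun ω => max (-(f ω)) 0))

/-- Integrability with respect to a finitely additive measure on all of `2^Ω`. -/
def FAIntegrable {Ω : Type*} (m : FinAddMeasure Ω) (f : Ω → ℝ) : Prop :=
  FAIntegrableOn Set.univ m.μ f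

/-- The integral with respect to a finitely additive measure on all of `2^Ω`. -/
noncomputable def faInt {Ω : Type*} (m : FinAddMeasure Ω) (f : Ω → ℝ) : ℝ :=
  faIntOn Set.univ m.μ f


namespace SepProbAux
variable {Ω : Type*} {K : Set (Ω → ℝ)}

noncomputable def pp (K : Set (Ω → ℝ)) (f : Ω → ℝ) : ℝ :=
  sInf {α | ∃ k ∈ K, ∀ ω, f ω ≤ α + k ω}

def Hsmul (K : Set (Ω → ℝ)) : Prop := ∀ (c : ℝ), 0 ≤ c → ∀ f ∈ K, c • f ∈ K
def Hns (K : Set (Ω → ℝ)) : Prop := ¬ ∃ k ∈ K, ∀ ω, (1 : ℝ) ≤ k ω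

lemma no_pos (hsmul : Hsmul K) (hns : Hns K)
    {c : ℝ} (hc : 0 < c) {k : Ω → ℝ} (hk : k ∈ K) (h : ∀ ω, c ≤ k ω) : False := by
  refine hns ⟨c⁻¹ • k, hsmul c⁻¹ (by positivity) k hk, fun ω => ?_⟩
  rw [Pi.smul_apply, smul_eq_mul, le_inv_mul_iff₀ hc, mul_one]
  exact h ω

lemma pp_set_nonempty (h0 : (0 : Ω → ℝ) ∈ K) {f : Ω → ℝ} {M : ℝ} (hM : ∀ ω, f ω ≤ M) :
    Set.Nonempty {α | ∃ k ∈ K, ∀ ω, f ω ≤ α + k ω} :=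
  ⟨M, 0, h0, fun ω => by simpa using hM ω⟩

lemma pp_set_bddBelow (hsmul : Hsmul K) (hns : Hns K) {f : Ω → ℝ} {L : ℝ} (hL : ∀ ω, L ≤ f ω) :
    BddBelow {α | ∃ k ∈ K, ∀ ω, f ω ≤ α + k ω} := by
  refine ⟨L - 1, ?_⟩
  rintro α ⟨k, hk, hle⟩
  by_contra hα
  push_neg at hα
  exact no_pos hsmul hns (c := L - α) (by linarith) hk
    (fun ω => by have := hle ω; have := hL ω; linarith)

lemma pp_le (hsmul : Hsmul K) (hns : Hns K) {f : Ω → ℝ} {L : ℝ} (hL : ∀ ω, L ≤ f ω)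
    {α : ℝ} {k : Ω → ℝ} (hk : k ∈ K) (h : ∀ ω, f ω ≤ α + k ω) : pp K f ≤ α :=
  csInf_le (pp_set_bddBelow hsmul hns hL) ⟨k, hk, h⟩

lemma le_pp (h0 : (0 : Ω → ℝ) ∈ K) {f : Ω → ℝ} {M : ℝ} (hM : ∀ ω, f ω ≤ M) {c : ℝ}
    (h : ∀ α ∈ {α | ∃ k ∈ K, ∀ ω, f ω ≤ α + k ω}, c ≤ α) : c ≤ pp K f :=
  le_csInf (pp_set_nonempty h0 hM) h

lemma pp_const_le (hsmul : Hsmul K) (hns : Hns K) (h0 : (0 : Ω → ℝ) ∈ K)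
    {f : Ω → ℝ} {c : ℝ} (hM : ∀ ω, f ω ≤ c) {L : ℝ} (hL : ∀ ω, L ≤ f ω) :
    pp K f ≤ c :=
  pp_le hsmul hns hL h0 (fun ω => by simpa using hM ω)

lemma const_le_pp (hsmul : Hsmul K) (hns : Hns K) (h0 : (0 : Ω → ℝ) ∈ K) (c : ℝ) :
    c ≤ pp K (fun _ => c) := by
  refine le_pp h0 (M := c) (fun _ => le_rfl) ?_
  rintro α ⟨k, hk, hle⟩
  by_contra hα
  push_neg at hα
  exact no_pos hsmul hns (c := c - α) (by linarith) hk (fun ω => by have := hle ω; linarith)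

lemma pp_add (hadd : ∀ f g : Ω → ℝ, f ∈ K → g ∈ K → f + g ∈ K)
    (hsmul : Hsmul K) (hns : Hns K) (h0 : (0 : Ω → ℝ) ∈ K)
    {f g : Ω → ℝ} {Mf Lf Mg Lg : ℝ}
    (hMf : ∀ ω, f ω ≤ Mf) (hLf : ∀ ω, Lf ≤ f ω)
    (hMg : ∀ ω, g ω ≤ Mg) (hLg : ∀ ω, Lg ≤ g ω) :
    pp K (f + g) ≤ pp K f + pp K g := by
  have step : ∀ a ∈ {α | ∃ k ∈ K, ∀ ω, f ω ≤ α + k ω},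
      ∀ b ∈ {α | ∃ k ∈ K, ∀ ω, g ω ≤ α + k ω}, pp K (f + g) ≤ a + b := by
    rintro a ⟨k, hk, hlek⟩ b ⟨k', hk', hlek'⟩
    refine pp_le hsmul hns (L := Lf + Lg) (fun ω => add_le_add (hLf ω) (hLg ω))
      (hadd _ _ hk hk') (fun ω => ?_)
    have := hlek ω; have := hlek' ω
    simp only [Pi.add_apply]; linarith
  have h1 : ∀ b ∈ {α | ∃ k ∈ K, ∀ ω, g ω ≤ α + k ω}, pp K (f + g) - b ≤ pp K f := by
    intro b hb
    refine le_csInf (pp_set_nonempty h0 hMf) (fun a ha => ?_)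
    have := step a ha b hb; linarith
  have h2 : pp K (f + g) - pp K f ≤ pp K g := by
    refine le_csInf (pp_set_nonempty h0 hMg) (fun b hb => ?_)
    have := h1 b hb; linarith
  linarith

lemma pp_smul_le (hsmul : Hsmul K) (hns : Hns K) (h0 : (0 : Ω → ℝ) ∈ K)
    {f : Ω → ℝ} {Mf Lf : ℝ}
    (hMf : ∀ ω, f ω ≤ Mf) (hLf : ∀ ω, Lf ≤ f ω) {c : ℝ} (hc : 0 < c) :
    pp K (c • f) ≤ c * pp K f := by
  have key : ∀ a ∈ {α | ∃ k ∈ K, ∀ ω, f ω ≤ α + k ω}, pp K (c • f) ≤ c * a := by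
    rintro a ⟨k, hk, hlek⟩
    refine pp_le hsmul hns (L := c * Lf)
      (fun ω => by rw [Pi.smul_apply, smul_eq_mul]; exact mul_le_mul_of_nonneg_left (hLf ω) hc.le)
      (hsmul c hc.le k hk) (fun ω => ?_)
    rw [Pi.smul_apply, smul_eq_mul, Pi.smul_apply, smul_eq_mul]
    nlinarith [hlek ω]
  rw [← div_le_iff₀' hc]
  exact le_csInf (pp_set_nonempty h0 hMf) (fun a ha => by
    rw [div_le_iff₀' hc]; exact key a ha)

lemma pp_smul (hsmul : Hsmul K) (hns : Hns K) (h0 : (0 : Ω → ℝ) ∈ K)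
    {f : Ω → ℝ} {Mf Lf : ℝ}
    (hMf : ∀ ω, f ω ≤ Mf) (hLf : ∀ ω, Lf ≤ f ω) {c : ℝ} (hc : 0 < c) :
    pp K (c • f) = c * pp K f := by
  refine le_antisymm (pp_smul_le hsmul hns h0 hMf hLf hc) ?_
  have h2 : pp K (c⁻¹ • (c • f)) ≤ c⁻¹ * pp K (c • f) := by
    refine pp_smul_le hsmul hns h0 (Mf := c * Mf) (Lf := c * Lf) ?_ ?_ (by positivity)
    · intro ω; rw [Pi.smul_apply, smul_eq_mul]; exact mul_le_mul_of_nonneg_left (hMf ω) hc.le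
    · intro ω; rw [Pi.smul_apply, smul_eq_mul]; exact mul_le_mul_of_nonneg_left (hLf ω) hc.le
  rw [smul_smul, inv_mul_cancel₀ hc.ne', one_smul] at h2
  rw [mul_comm, ← le_div_iff₀ hc, div_eq_inv_mul, mul_comm c⁻¹]
  calc pp K f ≤ c⁻¹ * pp K (c • f) := h2
    _ = pp K (c • f) * c⁻¹ := mul_comm _ _

variable {Ω : Type*}

def Bdd (Ω : Type*) : Submodule ℝ (Ω → ℝ) where
  carrier := {f | ∃ M, ∀ ω, |f ω| ≤ M}
  add_mem' := by
    rintro f g ⟨M, hM⟩ ⟨N, hN⟩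
    exact ⟨M + N, fun ω => (abs_add_le _ _).trans (add_le_add (hM ω) (hN ω))⟩
  zero_mem' := ⟨0, fun ω => by simp⟩
  smul_mem' := by
    rintro c f ⟨M, hM⟩
    exact ⟨|c| * M, fun ω => by
      rw [Pi.smul_apply, smul_eq_mul, abs_mul]
      exact mul_le_mul_of_nonneg_left (hM ω) (abs_nonneg c)⟩

def oneB (Ω : Type*) [Nonempty Ω] : Bdd Ω := ⟨fun _ => 1, ⟨1, fun ω => by simp⟩⟩

lemma oneB_ne_zero [Nonempty Ω] : oneB Ω ≠ 0 := by
  intro h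
  have := congrFun (congrArg Subtype.val h) (Classical.arbitrary Ω)
  simp [oneB] at this

theorem exists_G [Nonempty Ω] {K : Set (Ω → ℝ)}
    (hadd : ∀ f g : Ω → ℝ, f ∈ K → g ∈ K → f + g ∈ K)
    (hsmul : Hsmul K) (h0 : (0 : Ω → ℝ) ∈ K) (hns : Hns K) :
    ∃ G : Bdd Ω →ₗ[ℝ] ℝ, G (oneB Ω) = 1 ∧ ∀ x : Bdd Ω, G x ≤ pp K x.val := by
  obtain ⟨G, hGext, hGle⟩ := exists_extension_of_le_sublinear
    (LinearPMap.mkSpanSingleton (oneB Ω) (1 : ℝ) oneB_ne_zero)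
    (fun x => pp K x.val)
    (fun c hc x => by
      obtain ⟨M, hM⟩ := x.2
      have h1 : ∀ ω, x.val ω ≤ M := fun ω => (le_abs_self _).trans (hM ω)
      have h2 : ∀ ω, -M ≤ x.val ω := fun ω => neg_le_of_abs_le (hM ω)
      exact pp_smul hsmul hns h0 h1 h2 hc)
    (fun x y => by
      obtain ⟨M, hM⟩ := x.2
      obtain ⟨N, hN⟩ := y.2
      exact pp_add hadd hsmul hns h0 (Mf := M) (Lf := -M) (Mg := N) (Lg := -N)
        (fun ω => (le_abs_self _).trans (hM ω))
        (fun ω => neg_le_of_abs_le (hM ω))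
        (fun ω => (le_abs_self _).trans (hN ω))
        (fun ω => neg_le_of_abs_le (hN ω)))
    (fun x => by
      obtain ⟨c, hc⟩ := Submodule.mem_span_singleton.mp x.2
      have hx : (x : Bdd Ω) = c • oneB Ω := hc.symm
      have hx2 : x = ⟨c • oneB Ω, by rw [hc]; exact x.2⟩ := Subtype.ext hx
      have happ : LinearPMap.mkSpanSingleton (oneB Ω) (1 : ℝ) oneB_ne_zero x = c • (1 : ℝ) := by
        rw [hx2]; exact LinearPMap.mkSpanSingleton'_apply _ _ _ c _
      rw [happ, smul_eq_mul, mul_one]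
      have hval : ((x : Bdd Ω) : Ω → ℝ) = fun _ => c := by
        rw [hx]; funext ω; simp [oneB]
      show c ≤ pp K ((x : Bdd Ω) : Ω → ℝ)
      rw [hval]
      exact const_le_pp hsmul hns h0 c)
  exact ⟨G, by
    have := hGext ⟨oneB Ω, Submodule.mem_span_singleton_self _⟩
    rw [this, LinearPMap.mkSpanSingleton_apply], hGle⟩

section Part2
variable {Ω : Type*}

noncomputable def indB (E : Set Ω) : Bdd Ω :=
  ⟨E.indicator (fun _ => 1), ⟨1, fun ω => by
    by_cases h : ω ∈ E <;> simp [Set.indicator_apply, h]⟩⟩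

noncomputable def simpleB {n : ℕ} (a : Fin n → ℝ) (E : Fin n → Set Ω) : Bdd Ω :=
  ∑ i, a i • indB (E i)

lemma simpleB_val {n : ℕ} (a : Fin n → ℝ) (E : Fin n → Set Ω) (ω : Ω) :
    (simpleB a E : Ω → ℝ) ω = ∑ i, a i * (E i).indicator (fun _ => (1 : ℝ)) ω := by
  simp only [simpleB, AddSubmonoidClass.coe_finset_sum, Finset.sum_apply, SetLike.val_smul,
    Pi.smul_apply, smul_eq_mul]
  rfl

lemma G_simple (G : Bdd Ω →ₗ[ℝ] ℝ) {n : ℕ} (a : Fin n → ℝ) (E : Fin n → Set Ω) :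
    ∑ i, a i * G (indB (E i)) = G (simpleB a E) := by
  rw [simpleB, map_sum]
  simp [map_smul, smul_eq_mul]

lemma layered_sum {N : ℕ} {ε t : ℝ} (hε : 0 < ε) (ht : 0 ≤ t) (htN : t ≤ N * ε) :
    ∑ i : Fin N, (if ((i : ℕ) + 1) * ε ≤ t then ε else 0) = (⌊t / ε⌋₊ : ℝ) * ε := by
  set Kt := ⌊t / ε⌋₊ with hKt
  have hKtN : Kt ≤ N := by
    have h1 : t / ε ≤ N := by rw [div_le_iff₀ hε]; exact htN
    calc Kt ≤ ⌊(N : ℝ)⌋₊ := Nat.floor_le_floor h1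
      _ = N := Nat.floor_natCast N
  have hcond : ∀ i : Fin N, (((i : ℕ) + 1) * ε ≤ t) ↔ ((i : ℕ) < Kt) := by
    intro i
    rw [← le_div_iff₀ hε]
    constructor
    · intro h
      have h2 : (i : ℕ) + 1 ≤ Kt := Nat.le_floor (by push_cast; linarith)
      omega
    · intro h
      have h2 : (i : ℕ) + 1 ≤ Kt := h
      have h3 : ((i : ℕ) + 1 : ℝ) ≤ (Kt : ℝ) := by exact_mod_cast h2
      have h4 : (Kt : ℝ) ≤ t / ε := Nat.floor_le (by positivity)
      linarith
  calc ∑ i : Fin N, (if ((i : ℕ) + 1) * ε ≤ t then ε else 0)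
      = ∑ i : Fin N, (if (i : ℕ) < Kt then ε else 0) :=
        Finset.sum_congr rfl fun i _ => by simp only [hcond i]
    _ = ∑ i ∈ Finset.range N, (if i < Kt then ε else 0) :=
        Fin.sum_univ_eq_sum_range (fun j => if j < Kt then ε else 0) N
    _ = ∑ i ∈ (Finset.range N).filter (fun i => i < Kt), ε := (Finset.sum_filter _ _).symm
    _ = ∑ i ∈ Finset.range Kt, ε := by
        congr 1
        ext i
        simp only [Finset.mem_filter, Finset.mem_range]
        omega
    _ = (Kt : ℝ) * ε := by rw [Finset.sum_const, Finset.card_range, nsmul_eq_mul]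

end Part2
section Part3
variable {Ω : Type*}
variable {Ω : Type*}

lemma layered {f : Ω → ℝ} {M ε : ℝ} (hf0 : ∀ ω, 0 ≤ f ω) (hfM : ∀ ω, f ω ≤ M) (hε : 0 < ε) :
    ∃ (n : ℕ) (a : Fin n → ℝ) (E : Fin n → Set Ω), (∀ i, 0 ≤ a i) ∧
      (∀ ω, (∑ i, a i * (E i).indicator (fun _ => (1 : ℝ)) ω) ≤ f ω) ∧
      (∀ ω, f ω ≤ (∑ i, a i * (E i).indicator (fun _ => (1 : ℝ)) ω) + ε) := by
  refine ⟨⌈M / ε⌉₊, fun _ => ε, fun i => {ω | ((i : ℕ) + 1) * ε ≤ f ω}, fun _ => hε.le, ?_, ?_⟩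
  all_goals
    have hsum : ∀ ω : Ω, (∑ i : Fin ⌈M / ε⌉₊,
        ε * ({ω' | ((i : ℕ) + 1) * ε ≤ f ω'}).indicator (fun _ => (1 : ℝ)) ω)
        = (⌊f ω / ε⌋₊ : ℝ) * ε := by
      intro ω
      have htN : f ω ≤ (⌈M / ε⌉₊ : ℕ) * ε := by
        have h1 : M / ε ≤ (⌈M / ε⌉₊ : ℝ) := Nat.le_ceil (M / ε)
        have h2 : M = (M / ε) * ε := by field_simp
        nlinarith [hfM ω]
      rw [← layered_sum hε (hf0 ω) htN]
      refine Finset.sum_congr rfl fun i _ => ?_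
      by_cases h : ((i : ℕ) + 1) * ε ≤ f ω <;>
        simp [Set.indicator_apply, Set.mem_setOf_eq, h]
  · intro ω
    rw [hsum ω]
    have h1 : (⌊f ω / ε⌋₊ : ℝ) ≤ f ω / ε := Nat.floor_le (div_nonneg (hf0 ω) hε.le)
    have h2 : f ω / ε * ε = f ω := by field_simp
    nlinarith
  · intro ω
    rw [hsum ω]
    have h1 : f ω / ε < (⌊f ω / ε⌋₊ : ℝ) + 1 := Nat.lt_floor_add_one _
    have h2 : f ω / ε * ε = f ω := by field_simp
    nlinarith

theorem exists_m [Nonempty Ω] {K : Set (Ω → ℝ)}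
    (hadd : ∀ f g : Ω → ℝ, f ∈ K → g ∈ K → f + g ∈ K)
    (hsmul : Hsmul K) (h0 : (0 : Ω → ℝ) ∈ K) (hns : Hns K) :
    ∃ m : FinAddProb Ω,
      ∀ k ∈ K, (∃ M : ℝ, ∀ ω, max (-(k ω)) 0 ≤ M) →
        FAIntegrable m.toFinAddMeasure k ∧ faInt m.toFinAddMeasure k ≤ 0 := by
  obtain ⟨G, hG1, hGle⟩ := exists_G hadd hsmul h0 hns
  have G_le_const : ∀ (x : Bdd Ω) (c : ℝ), (∀ ω, (x : Ω → ℝ) ω ≤ c) → G x ≤ c := by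
    intro x c hc
    obtain ⟨M, hM⟩ := x.2
    exact (hGle x).trans
      (pp_const_le hsmul hns h0 hc (L := -M) (fun ω => neg_le_of_abs_le (hM ω)))
  have G_key : ∀ (x y : Bdd Ω) (ε : ℝ) (k : Ω → ℝ), k ∈ K →
      (∀ ω, (x : Ω → ℝ) ω ≤ (y : Ω → ℝ) ω + k ω + ε) → G x ≤ G y + ε := by
    intro x y ε k hk hle
    obtain ⟨Mx, hMx⟩ := x.2
    obtain ⟨My, hMy⟩ := y.2
    have h1 : G (x - y) ≤ ε := by
      refine (hGle _).trans (pp_le hsmul hns (L := -(Mx + My)) ?_ hk ?_)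
      · intro ω
        have e1 := neg_le_of_abs_le (hMx ω)
        have e2 := (le_abs_self ((y : Ω → ℝ) ω)).trans (hMy ω)
        show -(Mx + My) ≤ ((x - y : Bdd Ω) : Ω → ℝ) ω
        rw [AddSubgroupClass.coe_sub, Pi.sub_apply]
        linarith
      · intro ω
        show ((x - y : Bdd Ω) : Ω → ℝ) ω ≤ ε + k ω
        rw [AddSubgroupClass.coe_sub, Pi.sub_apply]
        have := hle ω
        linarith
    rw [map_sub] at h1
    linarith
  refine ⟨⟨⟨fun E => G (indB E), ?_, ?_, ?_⟩, ?_⟩, ?_⟩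
  · -- nonneg
    intro E
    have h := G_le_const (-(indB E)) 0 (fun ω => by
      show (((-(indB E) : Bdd Ω)) : Ω → ℝ) ω ≤ 0
      rw [NegMemClass.coe_neg, Pi.neg_apply]
      have : (0 : ℝ) ≤ (indB E : Ω → ℝ) ω := by
        show (0 : ℝ) ≤ E.indicator (fun _ => 1) ω
        exact Set.indicator_nonneg (fun _ _ => zero_le_one) ω
      linarith)
    rw [map_neg] at h
    linarith
  · -- empty
    have he : indB (∅ : Set Ω) = 0 := Subtype.ext (by
      show (∅ : Set Ω).indicator (fun _ => (1 : ℝ)) = 0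
      funext ω; simp)
    show G (indB (∅ : Set Ω)) = 0
    rw [he, map_zero]
  · -- add
    intro E F hd
    have he : indB (E ∪ F) = indB E + indB F := Subtype.ext (by
      show (E ∪ F).indicator (fun _ => (1 : ℝ)) = E.indicator _ + F.indicator _
      exact Set.indicator_union_of_disjoint hd _)
    show G (indB (E ∪ F)) = G (indB E) + G (indB F)
    rw [he, map_add]
  · -- total
    have he : indB (Set.univ : Set Ω) = oneB Ω := Subtype.ext (by
      show (Set.univ : Set Ω).indicator (fun _ => (1 : ℝ)) = fun _ => 1
      simp)
    show G (indB Set.univ) = 1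
    rw [he, hG1]
  · -- main property
    intro k hk hMex
    obtain ⟨M, hM⟩ := hMex
    have hM0 : (0 : ℝ) ≤ M := le_trans (le_max_right _ _) (hM (Classical.arbitrary Ω))
    have hpm : ∀ ω, max (k ω) 0 = k ω + max (-(k ω)) 0 := by
      intro ω
      rcases le_total 0 (k ω) with h | h
      · rw [max_eq_left h, max_eq_right (neg_nonpos.mpr h), add_zero]
      · rw [max_eq_right h, max_eq_left (neg_nonneg.mpr h)]; ring
    have repr : ∀ (f : Ω → ℝ) (r : ℝ), r ∈ lowerSums Set.univ (fun E => G (indB E)) f →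
        ∃ x : Bdd Ω, (∀ ω, (x : Ω → ℝ) ω ≤ f ω) ∧ r = G x := by
      rintro f r ⟨n, a, E, ha, -, hle, rfl⟩
      refine ⟨simpleB a E, fun ω => by rw [simpleB_val]; exact hle ω, ?_⟩
      show (∑ i, a i * G (indB (E i))) = G (simpleB a E)
      exact G_simple G a E
    have zero_mem : ∀ f : Ω → ℝ, (∀ ω, 0 ≤ f ω) →
        (0 : ℝ) ∈ lowerSums Set.univ (fun E => G (indB E)) f := by
      intro f hf
      exact ⟨0, Fin.elim0, Fin.elim0, fun i => i.elim0, fun i => i.elim0,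
        fun ω => by simpa using hf ω, by simp⟩
    have bddp : BddAbove (lowerSums Set.univ (fun E => G (indB E)) (fun ω => max (k ω) 0)) := by
      refine ⟨M, fun r hr => ?_⟩
      obtain ⟨x, hx, rfl⟩ := repr _ r hr
      have h := G_key x 0 M k hk (fun ω => by
        have h1 := hx ω
        have h2 := hM ω
        have h3 := hpm ω
        have h4 : ((0 : Bdd Ω) : Ω → ℝ) ω = 0 := rfl
        rw [h4]
        linarith)
      rw [map_zero] at h
      linarith
    have bddm : BddAbove (lowerSums Set.univ (fun E => G (indB E))
        (fun ω => max (-(k ω)) 0)) := by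
      refine ⟨M, fun r hr => ?_⟩
      obtain ⟨x, hx, rfl⟩ := repr _ r hr
      exact G_le_const x M (fun ω => (hx ω).trans (hM ω))
    have hsups : sSup (lowerSums Set.univ (fun E => G (indB E)) (fun ω => max (k ω) 0)) ≤
        sSup (lowerSums Set.univ (fun E => G (indB E)) (fun ω => max (-(k ω)) 0)) := by
      refine csSup_le ⟨0, zero_mem _ (fun ω => le_max_right _ _)⟩ (fun r hr => ?_)
      obtain ⟨x, hx, rfl⟩ := repr _ r hr
      refine le_of_forall_pos_le_add (fun ε hε => ?_)
      obtain ⟨n, a, E, ha, hlow, hupp⟩ :=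
        layered (f := fun ω => max (-(k ω)) 0) (M := M) (fun ω => le_max_right _ _) hM hε
      have hmem : (∑ i, a i * G (indB (E i))) ∈
          lowerSums Set.univ (fun E => G (indB E)) (fun ω => max (-(k ω)) 0) :=
        ⟨n, a, E, ha, fun i => Set.mem_univ _, hlow, rfl⟩
      have h1 : G x ≤ G (simpleB a E) + ε := by
        refine G_key x (simpleB a E) ε k hk (fun ω => ?_)
        rw [simpleB_val]
        have e1 := hx ω
        have e2 := hupp ω
        have e3 := hpm ω
        linarith
      have h2 : G (simpleB a E) ≤
          sSup (lowerSums Set.univ (fun E => G (indB E)) (fun ω => max (-(k ω)) 0)) := by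
        refine le_csSup bddm ?_
        rwa [← G_simple G a E]
      linarith
    constructor
    · exact ⟨bddp, bddm⟩
    · show sSup _ - sSup _ ≤ 0
      exact sub_nonpos.mpr hsups

end Part3
end SepProbAux
open SepProbAux
/-- for a convex cone `K ⊆ ℝ^Ω`, with
`K_b = {k ∈ K : k⁻ bounded}`, there exists a finitely additive probability `m`
on `2^Ω` integrating every `k ∈ K_b` with `m(k) ≤ 0` if and only if `K`
contains no sure win (no `k ∈ K` with `k ≥ 1` pointwise). -/
theorem separating_probability_iff_no_sure_win {Ω : Type*} [Nonempty Ω]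
    (K : Set (Ω → ℝ))
    (hadd : ∀ f g : Ω → ℝ, f ∈ K → g ∈ K → f + g ∈ K)
    (hsmul : ∀ (c : ℝ), 0 ≤ c → ∀ f ∈ K, c • f ∈ K) :
    (∃ m : FinAddProb Ω,
      ∀ k ∈ K, (∃ M : ℝ, ∀ ω, max (-(k ω)) 0 ≤ M) →
        FAIntegrable m.toFinAddMeasure k ∧ faInt m.toFinAddMeasure k ≤ 0) ↔
    ¬ ∃ k ∈ K, ∀ ω, (1 : ℝ) ≤ k ω := by
  constructor
  · rintro ⟨m, hm⟩ ⟨k, hk, h1⟩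
    have hbdd : ∃ M : ℝ, ∀ ω, max (-(k ω)) 0 ≤ M :=
      ⟨0, fun ω => by
        have := h1 ω
        rw [max_eq_right (by linarith)]⟩
    obtain ⟨hint, hle⟩ := hm k hk hbdd
    have hm0 : ∀ r ∈ lowerSums Set.univ m.μ (fun ω => max (-(k ω)) 0), r ≤ 0 := by
      rintro r ⟨n, a, E, ha, -, hles, rfl⟩
      have hterm : ∀ i ∈ Finset.univ (α := Fin n), a i * m.μ (E i) = 0 := by
        intro i _
        rcases Set.eq_empty_or_nonempty (E i) with hE | ⟨ω, hω⟩
        · rw [hE, m.empty, mul_zero]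
        · have hsle : (∑ j, a j * (E j).indicator (fun _ => (1 : ℝ)) ω) ≤ max (-(k ω)) 0 :=
            hles ω
          have hmax : max (-(k ω)) 0 = 0 := max_eq_right (by have := h1 ω; linarith)
          rw [hmax] at hsle
          have hnn : ∀ j ∈ Finset.univ (α := Fin n),
              0 ≤ a j * (E j).indicator (fun _ => (1 : ℝ)) ω :=
            fun j _ => mul_nonneg (ha j) (Set.indicator_nonneg (fun _ _ => zero_le_one) ω)
          have hsum0 : (∑ j, a j * (E j).indicator (fun _ => (1 : ℝ)) ω) = 0 :=
            le_antisymm hsle (Finset.sum_nonneg hnn)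
          have hzero := (Finset.sum_eq_zero_iff_of_nonneg hnn).mp hsum0 i (Finset.mem_univ i)
          rw [Set.indicator_of_mem hω, mul_one] at hzero
          rw [hzero, zero_mul]
      rw [Finset.sum_eq_zero hterm]
    have hzm : (0 : ℝ) ∈ lowerSums Set.univ m.μ (fun ω => max (-(k ω)) 0) :=
      ⟨0, Fin.elim0, Fin.elim0, fun i => i.elim0, fun i => i.elim0,
        fun ω => by simp, by simp⟩
    have s_m_le : sSup (lowerSums Set.univ m.μ (fun ω => max (-(k ω)) 0)) ≤ 0 :=
      csSup_le ⟨0, hzm⟩ hm0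
    have one_mem : (1 : ℝ) ∈ lowerSums Set.univ m.μ (fun ω => max (k ω) 0) := by
      refine ⟨1, fun _ => 1, fun _ => Set.univ, fun _ => zero_le_one,
        fun _ => Set.mem_univ _, fun ω => ?_, ?_⟩
      · simp only [Finset.univ_unique, Finset.sum_singleton, Set.indicator_univ, one_mul]
        exact le_max_of_le_left (h1 ω)
      · simp [m.total]
    have s_p_ge : (1 : ℝ) ≤ sSup (lowerSums Set.univ m.μ (fun ω => max (k ω) 0)) :=
      le_csSup hint.1 one_mem
    have : faInt m.toFinAddMeasure k =
        sSup (lowerSums Set.univ m.μ (fun ω => max (k ω) 0)) -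
        sSup (lowerSums Set.univ m.μ (fun ω => max (-(k ω)) 0)) := rfl
    rw [this] at hle
    linarith
  · intro hns
    set K' : Set (Ω → ℝ) := insert 0 K with hK'
    have hadd' : ∀ f g : Ω → ℝ, f ∈ K' → g ∈ K' → f + g ∈ K' := by
      rintro f g (rfl | hf) (rfl | hg)
      · simp [K']
      · simpa [K'] using Set.mem_insert_of_mem _ hg
      · simpa [K'] using Set.mem_insert_of_mem _ hf
      · exact Set.mem_insert_of_mem _ (hadd f g hf hg)
    have hsmul' : Hsmul K' := by
      rintro c hc f (rfl | hf)
      · simp [K']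
      · exact Set.mem_insert_of_mem _ (hsmul c hc f hf)
    have h0' : (0 : Ω → ℝ) ∈ K' := Set.mem_insert _ _
    have hns' : Hns K' := by
      rintro ⟨k, (rfl | hk), h1⟩
      · have := h1 (Classical.arbitrary Ω)
        simp at this
        linarith
      · exact hns ⟨k, hk, h1⟩
    obtain ⟨m, hm⟩ := exists_m hadd' hsmul' h0' hns'
    exact ⟨m, fun k hk hb => hm k (Set.mem_insert_of_mem _ hk) hb⟩
end

section
/- Let A ⊆ 2^Ω be a family of sets, λ : A → ℝ, and let K be the convex cone of all finite sums Σ_{n=1}^N a_n(1_{F_n} − λ(F_n)) with a_n ∈ ℝ and F_n ∈ A. Then K contains no sure win (no element ≥ 1 pointwise) if and only if there exists a finitely additive probability m on 2^Ω with m(F) = λ(F) for all F ∈ A. -/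
open Filter Set

/-- Bounded functions as a submodule. -/
def BddSub (Ω : Type*) : Submodule ℝ (Ω → ℝ) where
  carrier := {f | ∃ C, ∀ ω, |f ω| ≤ C}
  add_mem' := by
    rintro f g ⟨C, hC⟩ ⟨D, hD⟩
    exact ⟨C + D, fun ω => (abs_add_le _ _).trans (add_le_add (hC ω) (hD ω))⟩
  zero_mem' := ⟨0, by simp⟩
  smul_mem' := by
    rintro c f ⟨C, hC⟩
    exact ⟨|c| * C, fun ω => by
      simpa [abs_mul] using mul_le_mul_of_nonneg_left (hC ω) (abs_nonneg c)⟩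

lemma FinAddMeasure.finadd {Ω : Type*} (m : FinAddMeasure Ω) {ι : Type*} (t : Finset ι)
    (E : ι → Set Ω) (hd : ∀ i ∈ t, ∀ j ∈ t, i ≠ j → Disjoint (E i) (E j)) :
    m.μ (⋃ i ∈ t, E i) = ∑ i ∈ t, m.μ (E i) := by
  classical
  induction t using Finset.induction_on with
  | empty => simpa using m.empty
  | @insert a s ha ih =>
    rw [Finset.sum_insert ha, Finset.set_biUnion_insert _ _ _, m.add _ _ ?_,
      ih fun i hi j hj hij => hd i (Finset.mem_insert_of_mem hi) j (Finset.mem_insert_of_mem hj) hij]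
    exact Set.disjoint_iUnion₂_right.2 fun i hi =>
      hd a (Finset.mem_insert_self a s) i (Finset.mem_insert_of_mem hi) (by rintro rfl; exact ha hi)

theorem no_surewin_of_prob {Ω : Type*} [Nonempty Ω] (A : Set (Set Ω)) (lam : Set Ω → ℝ)
    (m : FinAddProb Ω) (hm : ∀ F ∈ A, m.μ F = lam F)
    {N : ℕ} (a : Fin N → ℝ) (F : Fin N → Set Ω) (hFA : ∀ i, F i ∈ A)
    (hk1 : ∀ ω, (1:ℝ) ≤ ∑ i, a i * ((F i).indicator (fun _ => (1:ℝ)) ω - lam (F i))) :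
    False := by
  classical
  set atom : (Fin N → Bool) → Set Ω := fun s => {ω | ∀ i, ω ∈ F i ↔ s i = true} with hatom
  have hconst : ∀ s, ∀ ω ∈ atom s,
      (∑ i, a i * ((F i).indicator (fun _ => (1:ℝ)) ω - lam (F i)))
        = ∑ i, a i * ((if s i = true then (1:ℝ) else 0) - lam (F i)) := by
    intro s ω hω
    refine Finset.sum_congr rfl fun i _ => ?_
    have hi := hω i
    by_cases h : s i = true
    · rw [Set.indicator_of_mem (hi.2 h)]; simp [h]
    · have hmem : ω ∉ F i := fun hω' => h (hi.1 hω')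
      rw [Set.indicator_of_notMem hmem]; simp [h]
  have hdisj : ∀ s t : Fin N → Bool, s ≠ t → Disjoint (atom s) (atom t) := by
    intro s t hst
    rw [Set.disjoint_left]
    intro ω hs ht
    refine hst (funext fun i => ?_)
    have h2 := (hs i).symm.trans (ht i)
    revert h2; cases s i <;> cases t i <;> simp
  have hcover : (⋃ s ∈ (Finset.univ : Finset (Fin N → Bool)), atom s) = Set.univ := by
    ext ω
    simp only [Set.mem_iUnion, Set.mem_univ, iff_true, Finset.mem_univ, exists_prop, true_and]
    exact ⟨fun i => decide (ω ∈ F i), fun i => by simp [hatom]⟩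
  have htot : ∑ s : Fin N → Bool, m.μ (atom s) = 1 := by
    rw [← m.toFinAddMeasure.finadd Finset.univ atom (fun s _ t _ hst => hdisj s t hst),
      hcover, m.total]
  have hFeq : ∀ i, m.μ (F i)
      = ∑ s : Fin N → Bool, (if s i = true then (1:ℝ) else 0) * m.μ (atom s) := by
    intro i
    have hset : F i = ⋃ s ∈ Finset.univ.filter (fun s : Fin N → Bool => s i = true), atom s := by
      ext ω
      simp only [Set.mem_iUnion, Finset.mem_filter, Finset.mem_univ, true_and, exists_prop]
      constructor
      · intro hω
        exact ⟨fun j => decide (ω ∈ F j), by simp [hω], fun j => by simp [hatom]⟩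
      · rintro ⟨s, hsi, hωs⟩
        exact (hωs i).2 hsi
    rw [hset, m.toFinAddMeasure.finadd _ _ (fun s _ t _ hst => hdisj s t hst),
      Finset.sum_filter]
    exact Finset.sum_congr rfl fun s _ => by split <;> simp
  have hsum0 : ∑ s : Fin N → Bool,
      m.μ (atom s) * (∑ i, a i * ((if s i = true then (1:ℝ) else 0) - lam (F i))) = 0 := by
    have h1 : ∀ s, m.μ (atom s) * (∑ i, a i * ((if s i = true then (1:ℝ) else 0) - lam (F i)))
        = ∑ i, (a i * ((if s i = true then (1:ℝ) else 0) * m.μ (atom s))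
            - a i * (lam (F i) * m.μ (atom s))) := by
      intro s
      rw [Finset.mul_sum]
      exact Finset.sum_congr rfl fun i _ => by ring
    rw [Finset.sum_congr rfl fun s _ => h1 s, Finset.sum_comm]
    have h2 : ∀ i, ∑ s : Fin N → Bool,
        (a i * ((if s i = true then (1:ℝ) else 0) * m.μ (atom s))
          - a i * (lam (F i) * m.μ (atom s))) = 0 := by
      intro i
      rw [Finset.sum_sub_distrib, ← Finset.mul_sum, ← Finset.mul_sum, ← hFeq i,
        ← Finset.mul_sum, htot, hm (F i) (hFA i)]
      ring
    rw [Finset.sum_congr rfl fun i _ => h2 i, Finset.sum_const, smul_zero]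
  have hge : (1:ℝ) ≤ ∑ s : Fin N → Bool,
      m.μ (atom s) * (∑ i, a i * ((if s i = true then (1:ℝ) else 0) - lam (F i))) := by
    have hle : ∑ s : Fin N → Bool, m.μ (atom s) ≤ ∑ s : Fin N → Bool,
        m.μ (atom s) * (∑ i, a i * ((if s i = true then (1:ℝ) else 0) - lam (F i))) := by
      refine Finset.sum_le_sum fun s _ => ?_
      rcases Set.eq_empty_or_nonempty (atom s) with h | ⟨ω, hω⟩
      · rw [h, m.empty]; simp
      · have h1 : 1 ≤ ∑ i, a i * ((if s i = true then (1:ℝ) else 0) - lam (F i)) := by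
          rw [← hconst s ω hω]; exact hk1 ω
        exact le_mul_of_one_le_right (m.nonneg _) h1
    linarith
  linarith

open Pointwise in
private theorem smul_setinf_aux : True := trivial

/-- The sublinear envelope used in the Hahn–Banach argument. -/
noncomputable def NNfun {Ω : Type*} (K : Set (Ω → ℝ)) (x : Ω → ℝ) : ℝ :=
  sInf {r | ∃ k ∈ K, r = ⨆ ω, (x ω + k ω)}

open Pointwise in
theorem prob_of_no_surewin {Ω : Type*} [Nonempty Ω] (A : Set (Set Ω)) (lam : Set Ω → ℝ)
    (K : Set (Ω → ℝ))
    (hK : K = { f | ∃ (N : ℕ) (a : Fin N → ℝ) (F : Fin N → Set Ω),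
        (∀ i, F i ∈ A) ∧
        f = fun ω => ∑ i, a i * ((F i).indicator (fun _ => (1 : ℝ)) ω - lam (F i)) })
    (hns : ¬ ∃ k ∈ K, ∀ ω, (1 : ℝ) ≤ k ω) :
    ∃ m : FinAddProb Ω, ∀ F ∈ A, m.μ F = lam F := by
  classical
  -- basic properties of K
  have hK0 : (0 : Ω → ℝ) ∈ K := by
    rw [hK]
    refine ⟨0, Fin.elim0, Fin.elim0, fun i => i.elim0, ?_⟩
    funext ω; simp
  have hKadd : ∀ k₁ ∈ K, ∀ k₂ ∈ K, k₁ + k₂ ∈ K := by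
    rw [hK]
    rintro k₁ ⟨N₁, a₁, F₁, hF₁, rfl⟩ k₂ ⟨N₂, a₂, F₂, hF₂, rfl⟩
    refine ⟨N₁ + N₂, Fin.append a₁ a₂, Fin.append F₁ F₂, ?_, ?_⟩
    · intro i
      refine Fin.addCases (motive := fun i => Fin.append F₁ F₂ i ∈ A) ?_ ?_ i
      · intro j; rw [Fin.append_left]; exact hF₁ j
      · intro j; rw [Fin.append_right]; exact hF₂ j
    · funext ω
      rw [Pi.add_apply, Fin.sum_univ_add]
      congr 1
      · exact Finset.sum_congr rfl fun j _ => by rw [Fin.append_left, Fin.append_left]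
      · exact Finset.sum_congr rfl fun j _ => by rw [Fin.append_right, Fin.append_right]
  have hKsmul : ∀ (c : ℝ), ∀ k ∈ K, c • k ∈ K := by
    rw [hK]
    rintro c k ⟨N, a, F, hF, rfl⟩
    refine ⟨N, fun i => c * a i, F, hF, ?_⟩
    funext ω
    rw [Pi.smul_apply, smul_eq_mul, Finset.mul_sum]
    exact Finset.sum_congr rfl fun i _ => by ring
  have hKbdd : ∀ k ∈ K, ∃ C, ∀ ω, |k ω| ≤ C := by
    rw [hK]
    rintro k ⟨N, a, F, hF, rfl⟩
    refine ⟨∑ i, |a i| * (1 + |lam (F i)|), fun ω => ?_⟩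
    refine (Finset.abs_sum_le_sum_abs _ _).trans (Finset.sum_le_sum fun i _ => ?_)
    rw [abs_mul]
    refine mul_le_mul_of_nonneg_left ?_ (abs_nonneg _)
    refine (abs_sub _ _).trans (add_le_add ?_ le_rfl)
    by_cases h : ω ∈ F i <;> simp [Set.indicator_apply, h]
  have hpos : ∀ k ∈ K, ∀ ε : ℝ, 0 < ε → ∃ ω, -ε < k ω := by
    intro k hk ε hε
    by_contra h
    push_neg at h
    refine hns ⟨(-ε⁻¹) • k, hKsmul _ k hk, fun ω => ?_⟩
    have h1 : ε⁻¹ * ε = 1 := inv_mul_cancel₀ hε.ne'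
    have h2 := h ω
    have h3 : (0:ℝ) < ε⁻¹ := inv_pos.2 hε
    rw [Pi.smul_apply, smul_eq_mul]
    nlinarith
  -- boundedness of sups
  have hbddab : ∀ x : Ω → ℝ, (∃ C, ∀ ω, |x ω| ≤ C) → ∀ k ∈ K,
      BddAbove (Set.range fun ω => x ω + k ω) := by
    rintro x ⟨C, hC⟩ k hk
    obtain ⟨D, hD⟩ := hKbdd k hk
    refine ⟨C + D, ?_⟩
    rintro r ⟨ω, rfl⟩
    have := abs_le.1 (hC ω); have := abs_le.1 (hD ω)
    have : x ω + k ω ≤ C + D := by linarith [(abs_le.1 (hC ω)).2, (abs_le.1 (hD ω)).2]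
    exact this
  have hSne : ∀ x : Ω → ℝ, Set.Nonempty {r | ∃ k ∈ K, r = ⨆ ω, (x ω + k ω)} := by
    intro x
    exact ⟨⨆ ω, (x ω + (0:Ω → ℝ) ω), 0, hK0, rfl⟩
  have hSbdd : ∀ x : Ω → ℝ, (∃ C, ∀ ω, |x ω| ≤ C) →
      BddBelow {r | ∃ k ∈ K, r = ⨆ ω, (x ω + k ω)} := by
    rintro x hxb
    obtain ⟨C, hC⟩ := hxb
    refine ⟨-C - 1, ?_⟩
    rintro r ⟨k, hk, rfl⟩
    obtain ⟨ω, hω⟩ := hpos k hk 1 one_pos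
    have h1 := le_ciSup (hbddab x ⟨C, hC⟩ k hk) ω
    have h2 := (abs_le.1 (hC ω)).1
    linarith
  have hNle : ∀ x : Ω → ℝ, (∃ C, ∀ ω, |x ω| ≤ C) → ∀ k ∈ K,
      NNfun K x ≤ ⨆ ω, (x ω + k ω) :=
    fun x hx k hk => csInf_le (hSbdd x hx) ⟨k, hk, rfl⟩
  -- subadditivity of NNfun
  have hN_add : ∀ x y : Ω → ℝ, (∃ C, ∀ ω, |x ω| ≤ C) → (∃ C, ∀ ω, |y ω| ≤ C) →
      NNfun K (x + y) ≤ NNfun K x + NNfun K y := by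
    intro x y hx hy
    refine le_of_forall_pos_le_add fun ε hε => ?_
    obtain ⟨r₁, hr₁S, hr₁⟩ := Real.lt_sInf_add_pos (hSne x) (half_pos hε)
    obtain ⟨r₂, hr₂S, hr₂⟩ := Real.lt_sInf_add_pos (hSne y) (half_pos hε)
    obtain ⟨k₁, hk₁, rfl⟩ := hr₁S
    obtain ⟨k₂, hk₂, rfl⟩ := hr₂S
    have hxy : ∃ C, ∀ ω, |(x + y) ω| ≤ C := by
      obtain ⟨C, hC⟩ := hx; obtain ⟨D, hD⟩ := hy
      exact ⟨C + D, fun ω => (abs_add_le _ _).trans (add_le_add (hC ω) (hD ω))⟩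
    have h1 : NNfun K (x + y) ≤ ⨆ ω, ((x + y) ω + (k₁ + k₂) ω) :=
      hNle _ hxy _ (hKadd k₁ hk₁ k₂ hk₂)
    have h2 : (⨆ ω, ((x + y) ω + (k₁ + k₂) ω))
        ≤ (⨆ ω, (x ω + k₁ ω)) + ⨆ ω, (y ω + k₂ ω) := by
      refine ciSup_le fun ω => ?_
      have e1 := le_ciSup (hbddab x hx k₁ hk₁) ω
      have e2 := le_ciSup (hbddab y hy k₂ hk₂) ω
      simp only [Pi.add_apply]
      linarith
    simp only [NNfun] at h1 hr₁ hr₂ ⊢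
    linarith
  -- positive homogeneity of NNfun
  have hN_smul : ∀ c : ℝ, 0 < c → ∀ x : Ω → ℝ, NNfun K (c • x) = c * NNfun K x := by
    intro c hc x
    have hset : {r | ∃ k ∈ K, r = ⨆ ω, ((c • x) ω + k ω)}
        = c • {r | ∃ k ∈ K, r = ⨆ ω, (x ω + k ω)} := by
      ext r
      constructor
      · rintro ⟨k, hk, rfl⟩
        refine Set.mem_smul_set.2 ⟨⨆ ω, (x ω + (c⁻¹ • k) ω), ⟨c⁻¹ • k, hKsmul _ k hk, rfl⟩, ?_⟩
        rw [smul_eq_mul, Real.mul_iSup_of_nonneg hc.le]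
        congr 1; funext ω
        simp only [Pi.smul_apply, smul_eq_mul]
        field_simp
      · rintro ⟨r', ⟨k, hk, rfl⟩, rfl⟩
        refine ⟨c • k, hKsmul _ k hk, ?_⟩
        show c • (⨆ ω, (x ω + k ω)) = ⨆ ω, ((c • x) ω + (c • k) ω)
        rw [smul_eq_mul, Real.mul_iSup_of_nonneg hc.le]
        congr 1; funext ω
        simp only [Pi.smul_apply, smul_eq_mul]; ring
    unfold NNfun
    rw [hset, Real.sInf_smul_of_nonneg hc.le, smul_eq_mul]
  -- the constant-one element
  have h1mem : (fun _ : Ω => (1:ℝ)) ∈ BddSub Ω := ⟨1, fun ω => by simp⟩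
  set one : BddSub Ω := ⟨fun _ => (1:ℝ), h1mem⟩ with hone
  have hone0 : one ≠ 0 := by
    intro h
    have h2 := congrFun (congrArg Subtype.val h) (Classical.arbitrary Ω)
    simpa [hone] using h2
  have H0 : ∀ c : ℝ, c • one = 0 → c • (1:ℝ) = 0 := fun c hc =>
    (smul_eq_zero.1 hc).elim (fun hc => by rw [hc, zero_smul]) fun hx' => absurd hx' hone0
  set φ := LinearPMap.mkSpanSingleton' (σ := RingHom.id ℝ) one (1 : ℝ) H0 with hφ
  have hφval : ∀ (c : ℝ) (h : c • one ∈ φ.domain), φ ⟨c • one, h⟩ = c := by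
    intro c h
    exact (LinearPMap.mkSpanSingleton'_apply one (1:ℝ) H0 c h).trans (by simp)
  have key : ∀ c : ℝ, c ≤ NNfun K (fun _ => c) := by
    intro c
    refine le_csInf (hSne _) ?_
    rintro r ⟨k, hk, rfl⟩
    refine le_of_forall_pos_le_add fun ε hε => ?_
    obtain ⟨ω, hω⟩ := hpos k hk ε hε
    have h1 := le_ciSup (hbddab (fun _ => c) ⟨|c|, fun _ => le_rfl⟩ k hk) ω
    have h2 : c ≤ c + k ω + ε := by linarith
    linarith
  have hf : ∀ y : φ.domain, φ y ≤ NNfun K ((y : BddSub Ω) : Ω → ℝ) := by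
    intro y
    obtain ⟨c, hc⟩ := Submodule.mem_span_singleton.1 y.2
    have hy : y = ⟨c • one, by rw [hc]; exact y.2⟩ := Subtype.ext hc.symm
    rw [hy, hφval c _]
    have hcoe : (((c • one : BddSub Ω) : Ω → ℝ)) = fun _ => c := by
      funext ω; simp [hone]
    rw [hcoe]
    exact key c
  obtain ⟨g, hg_eq, hg_le⟩ := exists_extension_of_le_sublinear φ
    (fun x : BddSub Ω => NNfun K (x : Ω → ℝ))
    (fun c hc x => by
      have := hN_smul c hc (x : Ω → ℝ)
      simpa using this)
    (fun x y => by
      have := hN_add (x : Ω → ℝ) (y : Ω → ℝ) x.2 y.2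
      simpa using this)
    hf
  -- the indicator elements
  have hindmem : ∀ E : Set Ω, E.indicator (fun _ => (1:ℝ)) ∈ BddSub Ω := by
    intro E
    exact ⟨1, fun ω => by by_cases h : ω ∈ E <;> simp [Set.indicator_apply, h]⟩
  have hg1 : g one = 1 := by
    have hmem : one ∈ φ.domain := Submodule.mem_span_singleton_self one
    have h1 := hg_eq ⟨one, hmem⟩
    have h2 : (⟨one, hmem⟩ : φ.domain) = ⟨(1:ℝ) • one, by rw [one_smul]; exact hmem⟩ :=
      Subtype.ext (one_smul ℝ one).symm
    rw [h1, h2, hφval 1 _]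
  have hgnonneg : ∀ E : Set Ω, 0 ≤ g ⟨E.indicator (fun _ => 1), hindmem E⟩ := by
    intro E
    have h := hg_le (-(⟨E.indicator (fun _ => 1), hindmem E⟩ : BddSub Ω))
    have hb : ∃ C, ∀ ω, |(-(E.indicator (fun _ => (1:ℝ)))) ω| ≤ C :=
      ⟨1, fun ω => by by_cases hω : ω ∈ E <;> simp [Set.indicator_apply, hω]⟩
    have h2 : NNfun K ((-(⟨E.indicator (fun _ => 1), hindmem E⟩ : BddSub Ω) : BddSub Ω) : Ω → ℝ)
        ≤ ⨆ ω, ((-(E.indicator (fun _ => (1:ℝ)))) ω + (0 : Ω → ℝ) ω) := by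
      exact hNle _ hb 0 hK0
    have h3 : (⨆ ω, ((-(E.indicator (fun _ => (1:ℝ)))) ω + (0 : Ω → ℝ) ω)) ≤ 0 := by
      refine ciSup_le fun ω => ?_
      by_cases hω : ω ∈ E <;> simp [Set.indicator_apply, hω]
    have h4 := (h.trans h2).trans h3
    rw [map_neg] at h4
    linarith
  -- the finitely additive probability
  refine ⟨⟨⟨fun E => g ⟨E.indicator (fun _ => 1), hindmem E⟩, hgnonneg, ?_, ?_⟩, ?_⟩, ?_⟩
  · -- empty
    show g ⟨(∅ : Set Ω).indicator (fun _ => 1), hindmem ∅⟩ = 0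
    have : (⟨(∅ : Set Ω).indicator (fun _ => 1), hindmem ∅⟩ : BddSub Ω) = 0 :=
      Subtype.ext (by funext ω; simp)
    rw [this, map_zero]
  · -- additivity
    intro E F hEF
    show g ⟨(E ∪ F).indicator (fun _ => 1), hindmem (E ∪ F)⟩
      = g ⟨E.indicator (fun _ => 1), hindmem E⟩ + g ⟨F.indicator (fun _ => 1), hindmem F⟩
    have : (⟨(E ∪ F).indicator (fun _ => 1), hindmem (E ∪ F)⟩ : BddSub Ω)
        = ⟨E.indicator (fun _ => 1), hindmem E⟩ + ⟨F.indicator (fun _ => 1), hindmem F⟩ :=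
      Subtype.ext (Set.indicator_union_of_disjoint hEF _)
    rw [this, map_add]
  · -- total
    show g ⟨(Set.univ : Set Ω).indicator (fun _ => 1), hindmem Set.univ⟩ = 1
    have : (⟨(Set.univ : Set Ω).indicator (fun _ => 1), hindmem Set.univ⟩ : BddSub Ω) = one :=
      Subtype.ext (by funext ω; simp [hone])
    rw [this, hg1]
  · -- agreement with lam
    intro F hF
    have hk₀ : (fun ω => F.indicator (fun _ => (1:ℝ)) ω - lam F) ∈ K := by
      rw [hK]
      refine ⟨1, fun _ => 1, fun _ => F, fun _ => hF, ?_⟩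
      funext ω; simp
    have hk₀' : (-1 : ℝ) • (fun ω => F.indicator (fun _ => (1:ℝ)) ω - lam F) ∈ K :=
      hKsmul _ _ hk₀
    set x : BddSub Ω := ⟨F.indicator (fun _ => 1), hindmem F⟩ - lam F • one with hx
    have hxb : ∃ C, ∀ ω, |((x : BddSub Ω) : Ω → ℝ) ω| ≤ C := x.2
    have hxcoe : ((x : BddSub Ω) : Ω → ℝ) = fun ω => F.indicator (fun _ => (1:ℝ)) ω - lam F := by
      funext ω; simp [hx, hone]
    have hle1 : g x ≤ 0 := by
      have h := hg_le x
      have h2 := hNle _ hxb _ hk₀'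
      have h3 : (⨆ ω, (((x : BddSub Ω) : Ω → ℝ) ω
          + ((-1 : ℝ) • (fun ω => F.indicator (fun _ => (1:ℝ)) ω - lam F)) ω)) ≤ 0 := by
        refine ciSup_le fun ω => ?_
        rw [hxcoe]
        simp
      exact (h.trans h2).trans h3
    have hle2 : g (-x) ≤ 0 := by
      have h := hg_le (-x)
      have hxb' : ∃ C, ∀ ω, |((-x : BddSub Ω) : Ω → ℝ) ω| ≤ C := (-x).2
      have h2 := hNle _ hxb' _ hk₀
      have h3 : (⨆ ω, (((-x : BddSub Ω) : Ω → ℝ) ω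
          + (fun ω => F.indicator (fun _ => (1:ℝ)) ω - lam F) ω)) ≤ 0 := by
        refine ciSup_le fun ω => ?_
        have : ((-x : BddSub Ω) : Ω → ℝ) ω = -(((x : BddSub Ω) : Ω → ℝ) ω) := rfl
        rw [this, hxcoe]
        simp
      exact (h.trans h2).trans h3
    rw [map_neg] at hle2
    have hgx : g x = g ⟨F.indicator (fun _ => 1), hindmem F⟩ - lam F := by
      rw [hx, map_sub, map_smul, hg1, smul_eq_mul, mul_one]
    have : g x = 0 := le_antisymm hle1 (by linarith)
    rw [hgx] at this
    linarith

/-- let `A ⊆ 2^Ω`, `lam : A → ℝ`, and let `K` be the convex cone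
(indeed linear span) of finite sums `∑ aₙ (1_{Fₙ} - lam Fₙ)` with `Fₙ ∈ A`.
Then `K` has no sure win iff some finitely additive probability `m` on `2^Ω`
agrees with `lam` on `A`. -/
theorem de_finetti_coherence {Ω : Type*} [Nonempty Ω]
    (A : Set (Set Ω)) (lam : Set Ω → ℝ)
    (K : Set (Ω → ℝ))
    (hK : K = { f | ∃ (N : ℕ) (a : Fin N → ℝ) (F : Fin N → Set Ω),
        (∀ i, F i ∈ A) ∧
        f = fun ω => ∑ i, a i * ((F i).indicator (fun _ => (1 : ℝ)) ω - lam (F i)) }) :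
    (¬ ∃ k ∈ K, ∀ ω, (1 : ℝ) ≤ k ω) ↔
    (∃ m : FinAddProb Ω, ∀ F ∈ A, m.μ F = lam F) := by
  constructor
  · exact fun hns => prob_of_no_surewin A lam K hK hns
  · rintro ⟨m, hm⟩ ⟨k, hkK, hk1⟩
    rw [hK] at hkK
    obtain ⟨N, a, F, hFA, rfl⟩ := hkK
    exact no_surewin_of_prob A lam m hm a F hFA fun ω => hk1 ω
end

section
/- Let L ⊆ ℝ^Ω be a convex cone containing the constants such that f ∈ L implies f⁺ is bounded, and let γ : L → ℝ be a concave integral with 0 < γ(1) < ∞. Then for each convex set C ⊆ L ∩ B with γ(C) := sup_{f ∈ C} γ(f) < ∞, there exists λ_C ∈ ba₊ with L ⊆ L(λ_C), γ(f) ≤ λ_C(f) for all f ∈ L, and sup_{f ∈ C} λ_C(f) = γ(C). -/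
open Filter Set

/-- The submodule of bounded functions on `Ω`. -/
def bddSubmodule (Ω : Type*) : Submodule ℝ (Ω → ℝ) where
  carrier := {b | ∃ M : ℝ, ∀ ω, |b ω| ≤ M}
  add_mem' := by
    rintro a b ⟨Ma, hMa⟩ ⟨Mb, hMb⟩
    exact ⟨Ma + Mb, fun ω => (abs_add_le _ _).trans (add_le_add (hMa ω) (hMb ω))⟩
  zero_mem' := ⟨0, fun ω => by simp⟩
  smul_mem' := by
    rintro c b ⟨M, hM⟩
    refine ⟨|c| * M, fun ω => ?_⟩
    rw [Pi.smul_apply, smul_eq_mul, abs_mul]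
    exact mul_le_mul_of_nonneg_left (hM ω) (abs_nonneg c)

/-- Indicator functions as elements of the bounded submodule. -/
noncomputable def indB {Ω : Type*} (A : Set Ω) : bddSubmodule Ω :=
  ⟨fun ω => A.indicator (fun _ => (1:ℝ)) ω, 1, fun ω => by
    by_cases h : ω ∈ A <;>
      simp [Set.indicator_of_mem, Set.indicator_of_notMem, h]⟩

/-- The set of values of admissible upper decompositions of `b`, used to define the
sublinear majorant for the Hahn-Banach argument. -/
def Pset {Ω : Type*} (L C : Set (Ω → ℝ)) (γ : (Ω → ℝ) → ℝ) (s : ℝ) (b : Ω → ℝ) : Set ℝ :=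
  {r | ∃ t : ℝ, ∃ g f : Ω → ℝ, ∃ c : ℝ, 0 ≤ t ∧ (t = 0 ∨ g ∈ C) ∧ f ∈ L ∧
    (∀ ω, b ω ≤ t * g ω - f ω + c) ∧ t * s - γ f + c * γ (fun _ => (1:ℝ)) ≤ r}

set_option maxHeartbeats 1600000 in
/-- Shapley-type lemma: a real-valued concave integral `γ` on a
convex cone `L` (containing the constants, with `f⁺` bounded for `f ∈ L`) with
`0 < γ(1)` attains, on every convex set `C` of bounded members of `L` with
`γ(C) = sup_{f ∈ C} γ(f) < ∞`, its sup through some core element `λ_C`. -/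
theorem concave_integral_core {Ω : Type*} [Nonempty Ω]
    (L : Set (Ω → ℝ))
    (hadd : ∀ f g : Ω → ℝ, f ∈ L → g ∈ L → f + g ∈ L)
    (hsmul : ∀ (c : ℝ), 0 ≤ c → ∀ f ∈ L, c • f ∈ L)
    (hconst : ∀ c : ℝ, (fun _ => c) ∈ L)
    (hbdd : ∀ f ∈ L, ∃ M : ℝ, ∀ ω, max (f ω) 0 ≤ M)
    (γ : (Ω → ℝ) → ℝ)
    (hmono : ∀ f g, f ∈ L → g ∈ L → (∀ ω, f ω ≤ g ω) → γ f ≤ γ g)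
    (hsuper : ∀ f g, f ∈ L → g ∈ L → γ f + γ g ≤ γ (f + g))
    (hhomog : ∀ (c : ℝ), 0 < c → ∀ f ∈ L, γ (c • f) = c * γ f)
    (hconstadd : ∀ (c : ℝ) (f : Ω → ℝ), f ∈ L →
        γ (fun ω => c + f ω) = γ (fun _ => c) + γ f)
    (hγ1 : 0 < γ (fun _ => (1 : ℝ))) :
    ∀ C : Set (Ω → ℝ), C ⊆ L → (∀ f ∈ C, ∃ M : ℝ, ∀ ω, |f ω| ≤ M) →
      (∀ f ∈ C, ∀ g ∈ C, ∀ t : ℝ, 0 ≤ t → t ≤ 1 → t • f + (1 - t) • g ∈ C) →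
      BddAbove (γ '' C) →
      ∃ lamC : FinAddMeasure Ω,
        (∀ f ∈ L, FAIntegrable lamC f ∧ γ f ≤ faInt lamC f) ∧
        sSup (faInt lamC '' C) = sSup (γ '' C) := by
  classical
  intro C hCL hCbdd hCconv hCbddA
  set g1 : ℝ := γ (fun _ => (1:ℝ)) with hg1def
  set s : ℝ := sSup (γ '' C) with hsdef
  -- basic facts about γ
  have hγ0 : γ (fun _ : Ω => (0:ℝ)) = 0 := by
    have h := hconstadd 0 (fun _ => 0) (hconst 0)
    simp only [zero_add] at h
    linarith
  have hγconst : ∀ c : ℝ, γ (fun _ : Ω => c) = c * g1 := by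
    have hpos : ∀ c : ℝ, 0 < c → γ (fun _ : Ω => c) = c * g1 := by
      intro c hc
      have h := hhomog c hc (fun _ => 1) (hconst 1)
      have he : (c • fun _ : Ω => (1:ℝ)) = fun _ : Ω => c := by
        funext ω; simp
      rwa [he] at h
    intro c
    rcases lt_trichotomy c 0 with hc | hc | hc
    · have h := hconstadd c (fun _ => -c) (hconst (-c))
      have he : (fun ω : Ω => c + (fun _ : Ω => -c) ω) = fun _ : Ω => (0:ℝ) := by
        funext ω; simp
      rw [he, hγ0] at h
      have h2 := hpos (-c) (by linarith)
      rw [h2] at h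
      linarith
    · rw [hc, hγ0]; ring
    · exact hpos c hc
  have hγC : ∀ g ∈ C, γ g ≤ s := fun g hg => le_csSup hCbddA ⟨g, hg, rfl⟩
  -- the value of γ on (t g + c)
  have hγtg : ∀ t : ℝ, ∀ g : Ω → ℝ, 0 ≤ t → (t = 0 ∨ g ∈ C) → ∀ c : ℝ,
      (fun ω => t * g ω + c) ∈ L ∧ γ (fun ω => t * g ω + c) ≤ t * s + c * g1 := by
    intro t g ht htg c
    rcases eq_or_lt_of_le ht with ht0 | htpos
    · have he : (fun ω => t * g ω + c) = fun _ : Ω => c := by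
        funext ω; rw [← ht0]; ring
      rw [he, hγconst c, ← ht0]
      exact ⟨hconst c, by linarith⟩
    · have hgC : g ∈ C := by
        rcases htg with h | h
        · exact absurd h.symm (ne_of_lt htpos)
        · exact h
      have hgL : g ∈ L := hCL hgC
      have htgL : t • g ∈ L := hsmul t ht g hgL
      have he : (fun ω => t * g ω + c) = fun ω => c + (t • g) ω := by
        funext ω; simp [mul_comm]; ring
      have hmem : (fun ω => t * g ω + c) ∈ L := by
        rw [he]
        exact hadd (fun _ => c) (t • g) (hconst c) htgL
      refine ⟨hmem, ?_⟩
      rw [he, hconstadd c (t • g) htgL, hγconst c, hhomog t htpos g hgL]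
      have : t * γ g ≤ t * s := mul_le_mul_of_nonneg_left (hγC g hgC) ht
      linarith
  -- key lower bound for elements of Pset
  have keylow : ∀ b : Ω → ℝ, ∀ f' : Ω → ℝ, f' ∈ L → (∀ ω, f' ω ≤ b ω) →
      ∀ r ∈ Pset L C γ s b, γ f' ≤ r := by
    rintro b f' hf' hle r ⟨t, g, f, c, ht, htg, hfL, hptw, hval⟩
    obtain ⟨hmem, hub⟩ := hγtg t g ht htg c
    have hpt : ∀ ω, (f' + f) ω ≤ t * g ω + c := by
      intro ω
      have h1 := hle ω
      have h2 := hptw ω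
      simp only [Pi.add_apply]
      linarith
    have h1 : γ f' + γ f ≤ γ (fun ω => t * g ω + c) :=
      le_trans (hsuper f' f hf' hfL) (hmono _ _ (hadd _ _ hf' hfL) hmem hpt)
    linarith
  set Bd := bddSubmodule Ω with hBd
  have hBdmem : ∀ b : Ω → ℝ, b ∈ Bd ↔ ∃ M : ℝ, ∀ ω, |b ω| ≤ M := fun b => Iff.rfl
  have hPne : ∀ b : Ω → ℝ, b ∈ Bd → (Pset L C γ s b).Nonempty := by
    rintro b ⟨M, hM⟩
    refine ⟨0 * s - γ (fun _ => 0) + M * g1, 0, b, fun _ => 0, M, le_refl 0,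
      Or.inl rfl, hconst 0, fun ω => ?_, le_refl _⟩
    have h := (abs_le.mp (hM ω)).2
    show b ω ≤ 0 * b ω - (fun _ : Ω => (0:ℝ)) ω + M
    simpa using h
  have hPbdd : ∀ b : Ω → ℝ, b ∈ Bd → BddBelow (Pset L C γ s b) := by
    rintro b ⟨M, hM⟩
    refine ⟨(-M) * g1, fun r hr => ?_⟩
    have h := keylow b (fun _ => -M) (hconst (-M))
      (fun ω => by show -M ≤ b ω; linarith [(abs_le.mp (hM ω)).1]) r hr
    rwa [hγconst (-M)] at h
  -- additivity of decompositions
  have hPadd : ∀ b₁ b₂ : Ω → ℝ, ∀ r₁ r₂ : ℝ, r₁ ∈ Pset L C γ s b₁ → r₂ ∈ Pset L C γ s b₂ →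
      r₁ + r₂ ∈ Pset L C γ s (b₁ + b₂) := by
    rintro b₁ b₂ r₁ r₂ ⟨t₁, g₁, f₁, c₁, ht₁, htg₁, hf₁, hp₁, hv₁⟩
      ⟨t₂, g₂, f₂, c₂, ht₂, htg₂, hf₂, hp₂, hv₂⟩
    have hsup := hsuper f₁ f₂ hf₁ hf₂
    have hfL : f₁ + f₂ ∈ L := hadd f₁ f₂ hf₁ hf₂
    rcases eq_or_lt_of_le ht₁ with h₁0 | h₁p
    · rcases eq_or_lt_of_le ht₂ with h₂0 | h₂p
      · refine ⟨0, g₁, f₁ + f₂, c₁ + c₂, le_refl 0, Or.inl rfl, hfL, fun ω => ?_, ?_⟩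
        · have e₁ : t₁ * g₁ ω = 0 := by rw [← h₁0]; ring
          have e₂ : t₂ * g₂ ω = 0 := by rw [← h₂0]; ring
          have := hp₁ ω; have := hp₂ ω
          simp only [Pi.add_apply]
          linarith
        · have e₁ : t₁ * s = 0 := by rw [← h₁0]; ring
          have e₂ : t₂ * s = 0 := by rw [← h₂0]; ring
          linarith
      · have hg₂C : g₂ ∈ C := by
          rcases htg₂ with h | h
          · exact absurd h.symm (ne_of_lt h₂p)
          · exact h
        refine ⟨t₂, g₂, f₁ + f₂, c₁ + c₂, ht₂, Or.inr hg₂C, hfL, fun ω => ?_, ?_⟩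
        · have e₁ : t₁ * g₁ ω = 0 := by rw [← h₁0]; ring
          have := hp₁ ω; have := hp₂ ω
          simp only [Pi.add_apply]
          linarith
        · have e₁ : t₁ * s = 0 := by rw [← h₁0]; ring
          linarith
    · rcases eq_or_lt_of_le ht₂ with h₂0 | h₂p
      · have hg₁C : g₁ ∈ C := by
          rcases htg₁ with h | h
          · exact absurd h.symm (ne_of_lt h₁p)
          · exact h
        refine ⟨t₁, g₁, f₁ + f₂, c₁ + c₂, ht₁, Or.inr hg₁C, hfL, fun ω => ?_, ?_⟩
        · have e₂ : t₂ * g₂ ω = 0 := by rw [← h₂0]; ring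
          have := hp₁ ω; have := hp₂ ω
          simp only [Pi.add_apply]
          linarith
        · have e₂ : t₂ * s = 0 := by rw [← h₂0]; ring
          linarith
      · have hg₁C : g₁ ∈ C := by
          rcases htg₁ with h | h
          · exact absurd h.symm (ne_of_lt h₁p)
          · exact h
        have hg₂C : g₂ ∈ C := by
          rcases htg₂ with h | h
          · exact absurd h.symm (ne_of_lt h₂p)
          · exact h
        set t := t₁ + t₂ with htdef
        have htpos : 0 < t := by positivity
        have htne : t ≠ 0 := ne_of_gt htpos
        set g : Ω → ℝ := (t₁ / t) • g₁ + (1 - t₁ / t) • g₂ with hgdef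
        have hgC : g ∈ C := hCconv g₁ hg₁C g₂ hg₂C (t₁ / t)
          (div_nonneg ht₁ (le_of_lt htpos))
          ((div_le_one htpos).mpr (by linarith))
        refine ⟨t, g, f₁ + f₂, c₁ + c₂, le_of_lt htpos, Or.inr hgC, hfL, fun ω => ?_, ?_⟩
        · have := hp₁ ω; have := hp₂ ω
          have e1 : t * (t₁ / t) = t₁ := by field_simp
          have hg : t * g ω = t₁ * g₁ ω + t₂ * g₂ ω := by
            calc t * g ω = (t * (t₁ / t)) * g₁ ω + (t - t * (t₁ / t)) * g₂ ω := by
                  show t * ((t₁ / t) * g₁ ω + (1 - t₁ / t) * g₂ ω) = _; ring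
            _ = t₁ * g₁ ω + t₂ * g₂ ω := by rw [e1, htdef]; ring
          simp only [Pi.add_apply]
          rw [hg]
          linarith
        · have : t * s = t₁ * s + t₂ * s := by rw [htdef]; ring
          linarith
  -- scaling of decompositions
  have hPsc : ∀ a : ℝ, 0 < a → ∀ b : Ω → ℝ, ∀ r ∈ Pset L C γ s b,
      a * r ∈ Pset L C γ s (a • b) := by
    rintro a ha b r ⟨t, g, f, c, ht, htg, hfL, hptw, hval⟩
    refine ⟨a * t, g, a • f, a * c, by positivity, ?_, hsmul a ha.le f hfL, fun ω => ?_, ?_⟩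
    · rcases htg with h | h
      · exact Or.inl (by rw [h, mul_zero])
      · exact Or.inr h
    · have := hptw ω
      simp only [Pi.smul_apply, smul_eq_mul]
      nlinarith
    · rw [hhomog a ha f hfL]
      nlinarith
  -- the sublinear functional
  set p : Bd → ℝ := fun b => sInf (Pset L C γ s (b : Ω → ℝ)) with hpdef
  have hp_le : ∀ (b : Bd) (r : ℝ), r ∈ Pset L C γ s (b : Ω → ℝ) → p b ≤ r :=
    fun b r hr => csInf_le (hPbdd _ b.2) hr
  have hp_ge : ∀ (b : Bd) (x : ℝ), (∀ r ∈ Pset L C γ s (b : Ω → ℝ), x ≤ r) → x ≤ p b :=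
    fun b x h => le_csInf (hPne _ b.2) h
  have N_add : ∀ x y : Bd, p (x + y) ≤ p x + p y := by
    intro x y
    have key : ∀ r₁ ∈ Pset L C γ s (x : Ω → ℝ), ∀ r₂ ∈ Pset L C γ s (y : Ω → ℝ),
        p (x + y) ≤ r₁ + r₂ := by
      intro r₁ h₁ r₂ h₂
      exact hp_le (x + y) (r₁ + r₂) (by
        have := hPadd (x : Ω → ℝ) (y : Ω → ℝ) r₁ r₂ h₁ h₂
        rwa [show ((x + y : Bd) : Ω → ℝ) = (x : Ω → ℝ) + (y : Ω → ℝ) from rfl])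
    have h2 : ∀ r₁ ∈ Pset L C γ s (x : Ω → ℝ), p (x + y) - r₁ ≤ p y := by
      intro r₁ h₁
      exact hp_ge y _ (fun r₂ h₂ => by linarith [key r₁ h₁ r₂ h₂])
    have h3 : p (x + y) - p y ≤ p x :=
      hp_ge x _ (fun r₁ h₁ => by linarith [h2 r₁ h₁])
    linarith
  have N_hom_le : ∀ a : ℝ, 0 < a → ∀ x : Bd, p (a • x) ≤ a * p x := by
    intro a ha x
    have h1 : ∀ r ∈ Pset L C γ s (x : Ω → ℝ), p (a • x) ≤ a * r := by
      intro r hr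
      exact hp_le (a • x) (a * r) (by
        have := hPsc a ha (x : Ω → ℝ) r hr
        rwa [show ((a • x : Bd) : Ω → ℝ) = a • (x : Ω → ℝ) from rfl])
    have h2 : p (a • x) / a ≤ p x :=
      hp_ge x _ (fun r hr => (div_le_iff₀' ha).mpr (h1 r hr))
    calc p (a • x) = a * (p (a • x) / a) := by field_simp
    _ ≤ a * p x := mul_le_mul_of_nonneg_left h2 ha.le
  have N_hom : ∀ a : ℝ, 0 < a → ∀ x : Bd, p (a • x) = a * p x := by
    intro a ha x
    refine le_antisymm (N_hom_le a ha x) ?_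
    have h := N_hom_le a⁻¹ (by positivity) (a • x)
    rw [show a⁻¹ • a • x = x by rw [smul_smul, inv_mul_cancel₀ (ne_of_gt ha), one_smul]] at h
    have := mul_le_mul_of_nonneg_left h ha.le
    rw [← mul_assoc, mul_inv_cancel₀ (ne_of_gt ha), one_mul] at this
    linarith
  -- Hahn-Banach extension of the zero functional on the trivial subspace
  have hp0 : (0:ℝ) ≤ p 0 := by
    refine hp_ge 0 0 (fun r hr => ?_)
    have h := keylow ((0 : Bd) : Ω → ℝ) (fun _ => 0) (hconst 0)
      (fun ω => le_refl _) r hr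
    rwa [hγ0] at h
  obtain ⟨Λ, hΛagree, hΛle⟩ := exists_extension_of_le_sublinear
    (⟨⊥, 0⟩ : Bd →ₗ.[ℝ] ℝ) p N_hom N_add (by
      rintro ⟨x, hx⟩
      have : x = 0 := by simpa using hx
      subst this
      simpa using hp0)
  -- key properties of Λ
  have hBkey : ∀ f : Ω → ℝ, f ∈ L → ∀ b : Bd, (∀ ω, f ω ≤ (b : Ω → ℝ) ω) → γ f ≤ Λ b := by
    intro f hf b hfb
    have h1 : Λ (-b) ≤ p (-b) := hΛle (-b)
    have h2 : p (-b) ≤ -γ f := hp_le (-b) (-γ f)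
      ⟨0, 0, f, 0, le_refl 0, Or.inl rfl, hf, fun ω => by
        have := hfb ω
        show -(b : Ω → ℝ) ω ≤ 0 * (0:ℝ) - f ω + 0
        linarith, by linarith⟩
    rw [map_neg] at h1
    linarith
  have hmonoΛ : ∀ b₁ b₂ : Bd, (∀ ω, (b₁ : Ω → ℝ) ω ≤ (b₂ : Ω → ℝ) ω) → Λ b₁ ≤ Λ b₂ := by
    intro b₁ b₂ h
    have := hBkey (fun _ => 0) (hconst 0) (b₂ - b₁) (fun ω => by
      show (0:ℝ) ≤ (b₂ : Ω → ℝ) ω - (b₁ : Ω → ℝ) ω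
      linarith [h ω])
    rw [hγ0, map_sub] at this
    linarith
  have hCkey : ∀ b : Bd, (b : Ω → ℝ) ∈ C → Λ b ≤ s := by
    intro b hb
    refine le_trans (hΛle b) (hp_le b s ⟨1, (b : Ω → ℝ), fun _ => 0, 0, zero_le_one,
      Or.inr hb, hconst 0, fun ω => by simp, by rw [hγ0]; linarith⟩)
  -- the finitely additive measure
  have hindnn : ∀ (A : Set Ω) (ω : Ω), 0 ≤ (indB A : Ω → ℝ) ω := by
    intro A ω
    show (0:ℝ) ≤ A.indicator (fun _ => (1:ℝ)) ω
    exact Set.indicator_nonneg (fun _ _ => zero_le_one) ω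
  have hμnn : ∀ A : Set Ω, 0 ≤ Λ (indB A) := by
    intro A
    have := hBkey (fun _ => 0) (hconst 0) (indB A) (fun ω => hindnn A ω)
    rwa [hγ0] at this
  set m : FinAddMeasure Ω :=
    ⟨fun A => Λ (indB A), hμnn, by
      show Λ (indB (∅ : Set Ω)) = 0
      have he : indB (∅ : Set Ω) = (0 : Bd) := by
        apply Subtype.ext; funext ω; simp [indB]
      rw [he, map_zero], by
      intro E F hEF
      show Λ (indB (E ∪ F)) = Λ (indB E) + Λ (indB F)
      have he : indB (E ∪ F) = indB E + indB F := by
        apply Subtype.ext; funext ω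
        show (E ∪ F).indicator (fun _ => (1:ℝ)) ω
          = E.indicator (fun _ => (1:ℝ)) ω + F.indicator (fun _ => (1:ℝ)) ω
        rw [Set.indicator_union_of_disjoint hEF]
      rw [he, map_add]⟩ with hmdef
  -- simple functions
  have hsimple : ∀ (n : ℕ) (a : Fin n → ℝ) (E : Fin n → Set Ω),
      ((∑ i, a i • indB (E i) : Bd) : Ω → ℝ)
        = (fun ω => ∑ i, a i * (E i).indicator (fun _ => (1:ℝ)) ω)
      ∧ Λ (∑ i, a i • indB (E i)) = ∑ i, a i * m.μ (E i) := by
    intro n a E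
    constructor
    · funext ω
      rw [show ((∑ i, a i • indB (E i) : Bd) : Ω → ℝ)
          = ∑ i, ((a i • indB (E i) : Bd) : Ω → ℝ) from
        map_sum (Bd.subtype) _ _, Finset.sum_apply]
      refine Finset.sum_congr rfl (fun i _ => ?_)
      rfl
    · rw [map_sum]
      refine Finset.sum_congr rfl (fun i _ => ?_)
      rw [map_smul, smul_eq_mul]
  have hL1 : ∀ (ψ : Ω → ℝ) (b : Bd), (∀ ω, ψ ω ≤ (b : Ω → ℝ) ω) →
      ∀ r ∈ lowerSums Set.univ m.μ ψ, r ≤ Λ b := by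
    rintro ψ b hψb r ⟨n, a, E, ha, hE, hle, hr⟩
    obtain ⟨hcoe, hΛval⟩ := hsimple n a E
    rw [hr, ← hΛval]
    refine hmonoΛ _ b (fun ω => ?_)
    rw [hcoe]
    exact le_trans (hle ω) (hψb ω)
  have hzeromem : ∀ ψ : Ω → ℝ, (∀ ω, 0 ≤ ψ ω) → (0:ℝ) ∈ lowerSums Set.univ m.μ ψ := by
    intro ψ hψ
    exact ⟨0, fun i => i.elim0, fun i => i.elim0, fun i => i.elim0, fun i => i.elim0,
      fun ω => by simpa using hψ ω, by simp⟩
  -- the integral of a bounded nonnegative function equals Λ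
  have hone : ((indB (Set.univ : Set Ω) : Bd) : Ω → ℝ) = fun _ => (1:ℝ) := by
    funext ω; simp [indB]
  have hΛ1pos : 0 < Λ (indB (Set.univ : Set Ω)) := by
    have := hBkey (fun _ => 1) (hconst 1) (indB Set.univ) (fun ω => by rw [hone])
    calc (0:ℝ) < g1 := hγ1
    _ ≤ _ := this
  have hL2 : ∀ b : Bd, (∀ ω, 0 ≤ (b : Ω → ℝ) ω) →
      sSup (lowerSums Set.univ m.μ (b : Ω → ℝ)) = Λ b := by
    intro b hbnn
    have hbddA : BddAbove (lowerSums Set.univ m.μ (b : Ω → ℝ)) :=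
      ⟨Λ b, fun r hr => hL1 _ b (fun ω => le_refl _) r hr⟩
    refine le_antisymm (csSup_le ⟨0, hzeromem _ hbnn⟩ (hL1 _ b (fun ω => le_refl _))) ?_
    set K := Λ (indB (Set.univ : Set Ω)) with hKdef
    refine le_of_forall_pos_le_add (fun ε' hε' => ?_)
    set ε : ℝ := ε' / K with hεdef
    have hε : 0 < ε := div_pos hε' hΛ1pos
    obtain ⟨M, hM⟩ := b.2
    obtain ⟨n, hn⟩ := exists_nat_ge (M / ε)
    have hMn : M ≤ n * ε := by
      rw [div_le_iff₀ hε] at hn; linarith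
    set Efam : Fin n → Set Ω := fun i => {ω | ((i : ℕ) + 1) * ε ≤ (b : Ω → ℝ) ω} with hEdef
    -- pointwise evaluation of the simple approximation
    have hptw : ∀ ω, (∑ i, ε * (Efam i).indicator (fun _ => (1:ℝ)) ω) ≤ (b : Ω → ℝ) ω
        ∧ (b : Ω → ℝ) ω ≤ (∑ i, ε * (Efam i).indicator (fun _ => (1:ℝ)) ω) + ε := by
      intro ω
      set x := (b : Ω → ℝ) ω with hxdef
      have hx0 : 0 ≤ x := hbnn ω
      have hxM : x ≤ M := le_trans (le_abs_self _) (hM ω)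
      set m' := ⌊x / ε⌋₊ with hm'def
      have hm'n : m' ≤ n := by
        have h1 : x / ε ≤ (n : ℝ) := by
          rw [div_le_iff₀ hε]; linarith
        calc m' = ⌊x / ε⌋₊ := rfl
        _ ≤ ⌊(n : ℝ)⌋₊ := Nat.floor_mono h1
        _ = n := Nat.floor_natCast n
      have hsum : (∑ i, ε * (Efam i).indicator (fun _ => (1:ℝ)) ω) = m' * ε := by
        have hterm : ∀ i : Fin n, ε * (Efam i).indicator (fun _ => (1:ℝ)) ω
            = if (i : ℕ) < m' then ε else 0 := by
          intro i
          by_cases h : ((i : ℕ) + 1) * ε ≤ x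
          · have hmem : ω ∈ Efam i := h
            have hlt : (i : ℕ) < m' := by
              have : ((i : ℕ) + 1 : ℝ) ≤ x / ε := by
                rw [le_div_iff₀ hε]; linarith
              have := Nat.le_floor (α := ℝ) (by exact_mod_cast this)
              omega
            simp [Set.indicator_of_mem hmem, hlt]
          · have hmem : ω ∉ Efam i := h
            have hlt : ¬ ((i : ℕ) < m') := by
              intro hcon
              have h1 : ((i : ℕ) + 1 : ℕ) ≤ m' := hcon
              have h2 : ((m' : ℝ)) ≤ x / ε := Nat.floor_le (by positivity)
              have h3 : ((i : ℕ) + 1 : ℝ) ≤ (m' : ℝ) := by exact_mod_cast h1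
              apply h
              have : ((i : ℕ) + 1 : ℝ) ≤ x / ε := le_trans h3 h2
              rw [le_div_iff₀ hε] at this
              linarith
            simp [Set.indicator_of_notMem hmem, hlt]
        rw [Finset.sum_congr rfl (fun i _ => hterm i)]
        rw [Fin.sum_univ_eq_sum_range (fun i => if i < m' then ε else 0) n]
        rw [Finset.sum_ite, Finset.sum_const_zero, add_zero, Finset.sum_const]
        have hfilter : (Finset.range n).filter (fun i => i < m') = Finset.range m' := by
          ext i
          simp only [Finset.mem_filter, Finset.mem_range]
          omega
        rw [hfilter, Finset.card_range, nsmul_eq_mul]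
      rw [hsum]
      constructor
      · have := Nat.floor_le (show (0:ℝ) ≤ x / ε by positivity)
        rw [← hm'def] at this
        calc (m' : ℝ) * ε ≤ (x / ε) * ε := by nlinarith
        _ = x := by field_simp
      · have := Nat.lt_floor_add_one (x / ε)
        rw [← hm'def] at this
        have h2 : x < ((m' : ℝ) + 1) * ε := by
          rw [← div_lt_iff₀ hε]; linarith
        linarith
    -- the lower sum
    have hr₀mem : (∑ i, ε * m.μ (Efam i)) ∈ lowerSums Set.univ m.μ (b : Ω → ℝ) :=
      ⟨n, fun _ => ε, Efam, fun _ => hε.le, fun _ => Set.mem_univ _,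
        fun ω => (hptw ω).1, rfl⟩
    obtain ⟨hcoe, hΛval⟩ := hsimple n (fun _ => ε) Efam
    have hΛb : Λ b ≤ (∑ i, ε * m.μ (Efam i)) + ε * K := by
      have hle : Λ b ≤ Λ ((∑ i, (fun _ : Fin n => ε) i • indB (Efam i))
          + ε • indB Set.univ) := by
        refine hmonoΛ b _ (fun ω => ?_)
        have hco : ((((∑ i, (fun _ : Fin n => ε) i • indB (Efam i)) : Bd)
            + ε • indB Set.univ : Bd) : Ω → ℝ) ω
            = (∑ i, ε * (Efam i).indicator (fun _ => (1:ℝ)) ω) + ε := by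
          have : ((((∑ i, (fun _ : Fin n => ε) i • indB (Efam i)) : Bd)
              + ε • indB Set.univ : Bd) : Ω → ℝ)
              = (((∑ i, (fun _ : Fin n => ε) i • indB (Efam i) : Bd)) : Ω → ℝ)
                + ε • ((indB (Set.univ : Set Ω) : Bd) : Ω → ℝ) := rfl
          rw [this]
          simp only [Pi.add_apply, Pi.smul_apply, smul_eq_mul]
          rw [hcoe, hone]
          simp
        rw [hco]
        exact (hptw ω).2
      rw [map_add, hΛval, map_smul, smul_eq_mul] at hle
      exact hle
    have hfin : (∑ i, ε * m.μ (Efam i)) ≤ sSup (lowerSums Set.univ m.μ (b : Ω → ℝ)) :=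
      le_csSup hbddA hr₀mem
    have : ε * K = ε' := by
      rw [hεdef]; field_simp
    linarith
  -- core property for all f ∈ L
  have hcore : ∀ f ∈ L, FAIntegrable m f ∧ γ f ≤ faInt m f := by
    intro f hf
    obtain ⟨M, hM⟩ := hbdd f hf
    have hM0 : 0 ≤ M := le_trans (le_max_right _ _) (hM (Classical.arbitrary Ω))
    set fplus : Bd := ⟨fun ω => max (f ω) 0, M, fun ω => by
      rw [abs_of_nonneg (le_max_right _ _)]; exact hM ω⟩ with hfpdef
    have hplusA : BddAbove (lowerSums Set.univ m.μ (fun ω => max (f ω) 0)) :=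
      ⟨Λ fplus, fun r hr => hL1 _ fplus (fun ω => le_refl _) r hr⟩
    have hminuskey : ∀ r ∈ lowerSums Set.univ m.μ (fun ω => max (-f ω) 0),
        r ≤ Λ fplus - γ f := by
      rintro r ⟨n, a, E, ha, hE, hle, hr⟩
      obtain ⟨hcoe, hΛval⟩ := hsimple n a E
      set elt : Bd := ∑ i, a i • indB (E i) with heltdef
      have hγle : γ f ≤ Λ (fplus - elt) := by
        refine hBkey f hf _ (fun ω => ?_)
        have hco : ((fplus - elt : Bd) : Ω → ℝ) ω
            = max (f ω) 0 - (∑ i, a i * (E i).indicator (fun _ => (1:ℝ)) ω) := by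
          have : ((fplus - elt : Bd) : Ω → ℝ)
              = ((fplus : Bd) : Ω → ℝ) - ((elt : Bd) : Ω → ℝ) := rfl
          rw [this]
          simp only [Pi.sub_apply]
          rw [hcoe]
        rw [hco]
        have h1 : (∑ i, a i * (E i).indicator (fun _ => (1:ℝ)) ω) ≤ max (-f ω) 0 := hle ω
        have : max (-f ω) 0 = max (f ω) 0 - f ω := by
          rcases le_total (f ω) 0 with h | h
          · rw [max_eq_left (by linarith), max_eq_right h]; ring
          · rw [max_eq_right (by linarith), max_eq_left h]; ring
        rw [this] at h1
        linarith
      rw [map_sub] at hγle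
      rw [hr, ← hΛval]
      linarith
    have hminusA : BddAbove (lowerSums Set.univ m.μ (fun ω => max (-f ω) 0)) :=
      ⟨Λ fplus - γ f, hminuskey⟩
    have hint : FAIntegrable m f := by
      constructor
      · exact hplusA
      · convert hminusA using 3
    have hplusnn : ∀ ω, (0:ℝ) ≤ (fplus : Ω → ℝ) ω := fun ω => le_max_right _ _
    have hsupplus : sSup (lowerSums Set.univ m.μ (fun ω => max (f ω) 0)) = Λ fplus :=
      hL2 fplus hplusnn
    have hsupminus : sSup (lowerSums Set.univ m.μ (fun ω => max (-f ω) 0))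
        ≤ Λ fplus - γ f :=
      csSup_le ⟨0, hzeromem _ (fun ω => le_max_right _ _)⟩ hminuskey
    refine ⟨hint, ?_⟩
    show γ f ≤ faIntOn Set.univ m.μ f
    unfold faIntOn
    have he1 : (fun ω => max (f ω) 0) = fun ω => max (f ω) 0 := rfl
    have he2 : (fun ω => max (-(f ω)) 0) = fun ω => max (-f ω) 0 := rfl
    rw [he2, hsupplus]
    linarith
  -- the integral of elements of C
  have hCint : ∀ f (hf : f ∈ C), faInt m f ≤ s ∧ γ f ≤ faInt m f := by
    intro f hf
    have hfL : f ∈ L := hCL hf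
    obtain ⟨M, hM⟩ := hCbdd f hf
    have hM0 : 0 ≤ M := le_trans (abs_nonneg _) (hM (Classical.arbitrary Ω))
    set fplus : Bd := ⟨fun ω => max (f ω) 0, M, fun ω => by
      rw [abs_of_nonneg (le_max_right _ _)]
      exact max_le (le_trans (le_abs_self _) (hM ω)) hM0⟩ with hfpdef
    set fminus : Bd := ⟨fun ω => max (-f ω) 0, M, fun ω => by
      rw [abs_of_nonneg (le_max_right _ _)]
      exact max_le (le_trans (neg_le_abs _) (hM ω)) hM0⟩ with hfmdef
    set bC : Bd := ⟨f, M, hM⟩ with hbCdef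
    have hdiff : fplus - fminus = bC := by
      apply Subtype.ext; funext ω
      show max (f ω) 0 - max (-f ω) 0 = f ω
      rcases le_total (f ω) 0 with h | h
      · rw [max_eq_right h, max_eq_left (by linarith)]; ring
      · rw [max_eq_left h, max_eq_right (by linarith)]; ring
    have hfa : faInt m f = Λ bC := by
      show faIntOn Set.univ m.μ f = Λ bC
      unfold faIntOn
      rw [show (fun ω => max (-(f ω)) 0) = fun ω => max (-f ω) 0 from rfl]
      rw [hL2 fplus (fun ω => le_max_right _ _), hL2 fminus (fun ω => le_max_right _ _),
        ← map_sub, hdiff]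
    constructor
    · rw [hfa]; exact hCkey bC hf
    · exact (hcore f hfL).2
  refine ⟨m, fun f hf => hcore f hf, ?_⟩
  rcases C.eq_empty_or_nonempty with hCe | ⟨g₀, hg₀⟩
  · rw [hsdef, hCe]; simp
  · have hbddInt : BddAbove (faInt m '' C) := by
      refine ⟨s, ?_⟩
      rintro _ ⟨f, hf, rfl⟩
      exact (hCint f hf).1
    refine le_antisymm ?_ ?_
    · refine csSup_le ⟨faInt m g₀, ⟨g₀, hg₀, rfl⟩⟩ ?_
      rintro _ ⟨f, hf, rfl⟩
      exact (hCint f hf).1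
    · refine csSup_le ⟨γ g₀, ⟨g₀, hg₀, rfl⟩⟩ ?_
      rintro _ ⟨f, hf, rfl⟩
      exact le_trans (hCint f hf).2 (le_csSup hbddInt ⟨f, hf, rfl⟩)
end

section
/- Let L be a vector sublattice of ℝ^Ω with 1 ∈ L and φ a positive linear functional on L. Then there exist a positive finitely additive measure m on 2^Ω with L ⊆ L(m), and a unique positive linear functional φ^⊥ on L with φ^⊥(1) = 0, such that φ(f) = φ(1)·m(f) + φ^⊥(f) for all f ∈ L. -/
open Filter Set

/-- truncation of `f` at level `n`. -/
def trunc {Ω : Type*} (f : Ω → ℝ) (n : ℕ) : Ω → ℝ := fun ω => min (f ω) n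

structure RieszSetup (Ω : Type*) where
  L : Set (Ω → ℝ)
  φ : (Ω → ℝ) → ℝ
  hLadd : ∀ f ∈ L, ∀ g ∈ L, f + g ∈ L
  hLsmul : ∀ c : ℝ, ∀ f ∈ L, c • f ∈ L
  hLsup : ∀ f ∈ L, ∀ g ∈ L, (fun ω => max (f ω) (g ω)) ∈ L
  h1 : (fun _ => (1:ℝ)) ∈ L
  hφadd : ∀ f ∈ L, ∀ g ∈ L, φ (f + g) = φ f + φ g
  hφsmul : ∀ c : ℝ, ∀ f ∈ L, φ (c • f) = c * φ f
  hφpos : ∀ f ∈ L, (∀ ω, 0 ≤ f ω) → 0 ≤ φ f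

namespace RieszSetup
variable {Ω : Type*} (S : RieszSetup Ω)

/-- positive part as functions -/
def fpos (f : Ω → ℝ) : Ω → ℝ := fun ω => max (f ω) 0
def fneg (f : Ω → ℝ) : Ω → ℝ := fun ω => max (-f ω) 0

lemma constL (c : ℝ) : (fun _ : Ω => c) ∈ S.L := by
  have := S.hLsmul c _ S.h1
  have e : c • (fun _ : Ω => (1:ℝ)) = fun _ : Ω => c := by funext ω; simp
  rwa [e] at this

lemma zeroL : (0 : Ω → ℝ) ∈ S.L := by
  have := S.constL 0
  convert this using 1
  rfl

lemma negL {f} (hf : f ∈ S.L) : -f ∈ S.L := by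
  have := S.hLsmul (-1) f hf
  simpa using this

lemma subL {f g} (hf : f ∈ S.L) (hg : g ∈ S.L) : f - g ∈ S.L := by
  have := S.hLadd f hf (-g) (S.negL hg)
  simpa [sub_eq_add_neg] using this

lemma minL {f g} (hf : f ∈ S.L) (hg : g ∈ S.L) :
    (fun ω => min (f ω) (g ω)) ∈ S.L := by
  have h := S.hLsup (-f) (S.negL hf) (-g) (S.negL hg)
  have h2 := S.negL h
  have : -(fun ω => max ((-f) ω) ((-g) ω)) = fun ω => min (f ω) (g ω) := by
    funext ω
    simp [max_neg_neg]
  rwa [this] at h2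

lemma fposL {f} (hf : f ∈ S.L) : RieszSetup.fpos f ∈ S.L := by
  have h := S.hLsup f hf _ (S.constL 0)
  exact h

lemma fnegL {f} (hf : f ∈ S.L) : RieszSetup.fneg f ∈ S.L :=
  S.fposL (S.negL hf)

lemma φ0 : S.φ 0 = 0 := by
  have := S.hφsmul 0 _ S.h1
  simpa using this

lemma φmono {f g} (hf : f ∈ S.L) (hg : g ∈ S.L) (h : ∀ ω, f ω ≤ g ω) :
    S.φ f ≤ S.φ g := by
  have hsub : g - f ∈ S.L := S.subL hg hf
  have hpos : 0 ≤ S.φ (g - f) := S.hφpos _ hsub fun ω => by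
    simpa [Pi.sub_apply, sub_nonneg] using h ω
  have hadd := S.hφadd f hf (g - f) hsub
  have : f + (g - f) = g := by abel
  rw [this] at hadd
  linarith


lemma truncL {f} (hf : f ∈ S.L) (n : ℕ) : trunc f n ∈ S.L :=
  S.minL hf (S.constL n)

/-- the admissible set for `T`. -/
def Tset (f : Ω → ℝ) : Set ℝ :=
  S.φ '' {h | h ∈ S.L ∧ (∀ ω, 0 ≤ h ω) ∧ (∃ C, ∀ ω, h ω ≤ C) ∧ ∀ ω, h ω ≤ f ω}

noncomputable def T (f : Ω → ℝ) : ℝ := sSup (S.Tset f)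

lemma zero_mem_Tset {f} (hf : ∀ ω, 0 ≤ f ω) : (0:ℝ) ∈ S.Tset f :=
  ⟨0, ⟨S.zeroL, fun _ => le_rfl, ⟨0, fun _ => le_rfl⟩, fun ω => by simpa using hf ω⟩, S.φ0⟩

lemma Tset_bdd {f} (hf : f ∈ S.L) : S.φ f ∈ upperBounds (S.Tset f) := by
  rintro r ⟨h, ⟨hhL, _, _, hle⟩, rfl⟩
  exact S.φmono hhL hf hle

lemma Tset_bddAbove {f} (hf : f ∈ S.L) : BddAbove (S.Tset f) := ⟨_, S.Tset_bdd hf⟩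

lemma T_le_φ {f} (hf : f ∈ S.L) (hf0 : ∀ ω, 0 ≤ f ω) : S.T f ≤ S.φ f :=
  csSup_le ⟨0, S.zero_mem_Tset hf0⟩ fun _ hr => S.Tset_bdd hf hr

lemma le_T {f h} (hfL : f ∈ S.L) (hh : h ∈ S.L) (hh0 : ∀ ω, 0 ≤ h ω)
    (hhb : ∃ C, ∀ ω, h ω ≤ C) (hle : ∀ ω, h ω ≤ f ω) : S.φ h ≤ S.T f :=
  le_csSup (S.Tset_bddAbove hfL) ⟨h, ⟨hh, hh0, hhb, hle⟩, rfl⟩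

lemma T_nonneg {f} (hf : f ∈ S.L) (hf0 : ∀ ω, 0 ≤ f ω) : 0 ≤ S.T f :=
  le_csSup (S.Tset_bddAbove hf) (S.zero_mem_Tset hf0)

lemma trunc_mem_le_T {f} (hf : f ∈ S.L) (hf0 : ∀ ω, 0 ≤ f ω) (n : ℕ) :
    S.φ (trunc f n) ≤ S.T f :=
  S.le_T hf (S.truncL hf n) (fun ω => le_min (hf0 ω) (Nat.cast_nonneg n))
    ⟨n, fun ω => min_le_right _ _⟩ (fun ω => min_le_left _ _)

lemma T_le_of_trunc {f B} (hf : f ∈ S.L) (hf0 : ∀ ω, 0 ≤ f ω)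
    (hB : ∀ n : ℕ, S.φ (trunc f n) ≤ B) : S.T f ≤ B := by
  apply csSup_le ⟨0, S.zero_mem_Tset hf0⟩
  rintro r ⟨h, ⟨hhL, hh0, ⟨C, hC⟩, hle⟩, rfl⟩
  have : S.φ h ≤ S.φ (trunc f ⌈C⌉₊) := by
    apply S.φmono hhL (S.truncL hf _)
    intro ω
    exact le_min (hle ω) ((hC ω).trans (Nat.le_ceil C))
  exact this.trans (hB _)


lemma T_add {f g} (hf : f ∈ S.L) (hg : g ∈ S.L)
    (hf0 : ∀ ω, 0 ≤ f ω) (hg0 : ∀ ω, 0 ≤ g ω) : S.T (f + g) = S.T f + S.T g := by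
  have hfg : f + g ∈ S.L := S.hLadd f hf g hg
  have hfg0 : ∀ ω, 0 ≤ (f + g) ω := fun ω => add_nonneg (hf0 ω) (hg0 ω)
  apply le_antisymm
  · -- split h = min h f + (h - min h f)
    apply csSup_le ⟨0, S.zero_mem_Tset hfg0⟩
    rintro r ⟨h, ⟨hhL, hh0, ⟨C, hC⟩, hle⟩, rfl⟩
    set h₁ : Ω → ℝ := fun ω => min (h ω) (f ω) with hh₁
    have hh₁L : h₁ ∈ S.L := S.minL hhL hf
    set h₂ : Ω → ℝ := h - h₁ with hh₂
    have hh₂L : h₂ ∈ S.L := S.subL hhL hh₁L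
    have hsplit : h = h₁ + h₂ := by funext ω; simp [hh₂]
    have h1T : S.φ h₁ ≤ S.T f :=
      S.le_T hf hh₁L (fun ω => le_min (hh0 ω) (hf0 ω)) ⟨C, fun ω => (min_le_left _ _).trans (hC ω)⟩
        (fun ω => min_le_right _ _)
    have h2T : S.φ h₂ ≤ S.T g := by
      apply S.le_T hg hh₂L
      · intro ω; simp [hh₂, hh₁]
      · exact ⟨C, fun ω => by
          have := hh0 ω
          have := hC ω
          have h1nn : 0 ≤ h₁ ω := le_min (hh0 ω) (hf0 ω)
          simp only [hh₂, Pi.sub_apply]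
          linarith⟩
      · intro ω
        have := hle ω
        simp only [hh₂, Pi.sub_apply, hh₁]
        rcases le_total (h ω) (f ω) with hc | hc
        · simpa [min_eq_left hc] using hg0 ω
        · simp [min_eq_right hc]
          have : (f + g) ω = f ω + g ω := rfl
          linarith [hle ω]
    calc S.φ h = S.φ h₁ + S.φ h₂ := by rw [hsplit]; exact S.hφadd _ hh₁L _ hh₂L
    _ ≤ S.T f + S.T g := add_le_add h1T h2T
  · -- sup of sums
    rw [← sub_nonneg]
    have step1 : S.T f ≤ S.T (f + g) - S.T g := by
      apply csSup_le ⟨0, S.zero_mem_Tset hf0⟩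
      rintro r ⟨h₁, ⟨h₁L, h₁0, ⟨C₁, hC₁⟩, h₁le⟩, rfl⟩
      rw [le_sub_iff_add_le, add_comm, ← le_sub_iff_add_le]
      apply csSup_le ⟨0, S.zero_mem_Tset hg0⟩
      rintro r ⟨h₂, ⟨h₂L, h₂0, ⟨C₂, hC₂⟩, h₂le⟩, rfl⟩
      rw [le_sub_iff_add_le]
      have : S.φ h₂ + S.φ h₁ = S.φ (h₁ + h₂) := (by rw [S.hφadd _ h₁L _ h₂L]; ring)
      rw [this]
      exact S.le_T hfg (S.hLadd _ h₁L _ h₂L) (fun ω => add_nonneg (h₁0 ω) (h₂0 ω))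
        ⟨C₁ + C₂, fun ω => add_le_add (hC₁ ω) (hC₂ ω)⟩
        (fun ω => add_le_add (h₁le ω) (h₂le ω))
    linarith

lemma T_zero : S.T 0 = 0 := by
  apply le_antisymm
  · apply csSup_le ⟨0, S.zero_mem_Tset fun ω => le_rfl⟩
    rintro r ⟨h, ⟨hhL, hh0, _, hle⟩, rfl⟩
    have : h = 0 := funext fun ω => le_antisymm (hle ω) (hh0 ω)
    rw [this, S.φ0]
  · exact S.T_nonneg S.zeroL fun ω => le_rfl

lemma T_smul {f} (hf : f ∈ S.L) (hf0 : ∀ ω, 0 ≤ f ω) {c : ℝ} (hc : 0 ≤ c) :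
    S.T (c • f) = c * S.T f := by
  rcases eq_or_lt_of_le hc with rfl | hc
  · have : (0:ℝ) • f = 0 := zero_smul _ _
    rw [this, S.T_zero, zero_mul]
  have hcf : c • f ∈ S.L := S.hLsmul c f hf
  have hcf0 : ∀ ω, 0 ≤ (c • f) ω := fun ω => by
    simpa using mul_nonneg hc.le (hf0 ω)
  apply le_antisymm
  · apply csSup_le ⟨0, S.zero_mem_Tset hcf0⟩
    rintro r ⟨h, ⟨hhL, hh0, ⟨C, hC⟩, hle⟩, rfl⟩
    have hinvL : c⁻¹ • h ∈ S.L := S.hLsmul _ _ hhL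
    have key : S.φ (c⁻¹ • h) ≤ S.T f := by
      apply S.le_T hf hinvL
      · intro ω; simpa using mul_nonneg (inv_nonneg.2 hc.le) (hh0 ω)
      · exact ⟨c⁻¹ * C, fun ω => by
          simpa using mul_le_mul_of_nonneg_left (hC ω) (inv_nonneg.2 hc.le)⟩
      · intro ω
        have := hle ω
        simp only [Pi.smul_apply, smul_eq_mul] at this ⊢
        rw [inv_mul_le_iff₀ hc]
        linarith [this]
    have : S.φ h = c * S.φ (c⁻¹ • h) := by
      rw [S.hφsmul _ _ hhL]
      field_simp
    rw [this]
    exact mul_le_mul_of_nonneg_left key hc.le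
  · rw [mul_comm, ← le_div_iff₀ hc]
    apply csSup_le ⟨0, S.zero_mem_Tset hf0⟩
    rintro r ⟨h, ⟨hhL, hh0, ⟨C, hC⟩, hle⟩, rfl⟩
    rw [le_div_iff₀ hc, mul_comm, ← S.hφsmul _ _ hhL]
    apply S.le_T hcf (S.hLsmul _ _ hhL)
    · intro ω; simpa using mul_nonneg hc.le (hh0 ω)
    · exact ⟨c * C, fun ω => by simpa using mul_le_mul_of_nonneg_left (hC ω) hc.le⟩
    · intro ω; simpa using mul_le_mul_of_nonneg_left (hle ω) hc.le

noncomputable def J (f : Ω → ℝ) : ℝ := S.T (fpos f) - S.T (fneg f)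

lemma max_zero_eq (x : ℝ) : max x 0 = x + max (-x) 0 := by
  rcases le_total x 0 with h | h
  · simp [max_eq_right h, max_eq_left (neg_nonneg.2 h)]
  · simp [max_eq_left h, max_eq_right (neg_nonpos.2 h)]

lemma fpos_nonneg (f : Ω → ℝ) : ∀ ω, 0 ≤ fpos f ω := fun ω => le_max_right _ _
lemma fneg_nonneg (f : Ω → ℝ) : ∀ ω, 0 ≤ fneg f ω := fun ω => le_max_right _ _

lemma J_add {f g} (hf : f ∈ S.L) (hg : g ∈ S.L) : S.J (f + g) = S.J f + S.J g := by
  have hfg := S.hLadd f hf g hg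
  have key : fpos (f + g) + (fneg f + fneg g) = fneg (f + g) + (fpos f + fpos g) := by
    funext ω
    simp only [Pi.add_apply, fpos, fneg]
    rw [max_zero_eq (f ω + g ω), max_zero_eq (f ω), max_zero_eq (g ω)]
    ring
  have e1 : S.T (fpos (f + g) + (fneg f + fneg g))
      = S.T (fpos (f+g)) + (S.T (fneg f) + S.T (fneg g)) := by
    rw [S.T_add (S.fposL hfg) (S.hLadd _ (S.fnegL hf) _ (S.fnegL hg))
      (fpos_nonneg _) (fun ω => add_nonneg (fneg_nonneg f ω) (fneg_nonneg g ω)),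
      S.T_add (S.fnegL hf) (S.fnegL hg) (fneg_nonneg f) (fneg_nonneg g)]
  have e2 : S.T (fneg (f + g) + (fpos f + fpos g))
      = S.T (fneg (f+g)) + (S.T (fpos f) + S.T (fpos g)) := by
    rw [S.T_add (S.fnegL hfg) (S.hLadd _ (S.fposL hf) _ (S.fposL hg))
      (fneg_nonneg _) (fun ω => add_nonneg (fpos_nonneg f ω) (fpos_nonneg g ω)),
      S.T_add (S.fposL hf) (S.fposL hg) (fpos_nonneg f) (fpos_nonneg g)]
  rw [key] at e1
  rw [e1] at e2
  simp only [J]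
  linarith [e2]

lemma fpos_smul_nonneg (f : Ω → ℝ) {c : ℝ} (hc : 0 ≤ c) : fpos (c • f) = c • fpos f := by
  funext ω
  simp only [fpos, Pi.smul_apply, smul_eq_mul]
  rw [mul_max_of_nonneg _ _ hc, mul_zero]

lemma fneg_smul_nonneg (f : Ω → ℝ) {c : ℝ} (hc : 0 ≤ c) : fneg (c • f) = c • fneg f := by
  funext ω
  simp only [fneg, Pi.smul_apply, smul_eq_mul]
  rw [show -(c * f ω) = c * (-f ω) by ring, mul_max_of_nonneg _ _ hc, mul_zero]

lemma fpos_smul_nonpos (f : Ω → ℝ) {c : ℝ} (hc : c ≤ 0) : fpos (c • f) = (-c) • fneg f := by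
  funext ω
  simp only [fpos, fneg, Pi.smul_apply, smul_eq_mul]
  rw [show c * f ω = (-c) * (-f ω) by ring, mul_max_of_nonneg _ _ (neg_nonneg.2 hc), mul_zero]

lemma fneg_smul_nonpos (f : Ω → ℝ) {c : ℝ} (hc : c ≤ 0) : fneg (c • f) = (-c) • fpos f := by
  funext ω
  simp only [fpos, fneg, Pi.smul_apply, smul_eq_mul]
  rw [show -(c * f ω) = (-c) * (f ω) by ring, mul_max_of_nonneg _ _ (neg_nonneg.2 hc), mul_zero]

lemma J_smul {f} (hf : f ∈ S.L) (c : ℝ) : S.J (c • f) = c * S.J f := by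
  rcases le_total 0 c with hc | hc
  · simp only [J]
    rw [fpos_smul_nonneg f hc, fneg_smul_nonneg f hc,
      S.T_smul (S.fposL hf) (fpos_nonneg f) hc, S.T_smul (S.fnegL hf) (fneg_nonneg f) hc]
    ring
  · simp only [J]
    rw [fpos_smul_nonpos f hc, fneg_smul_nonpos f hc,
      S.T_smul (S.fnegL hf) (fneg_nonneg f) (neg_nonneg.2 hc),
      S.T_smul (S.fposL hf) (fpos_nonneg f) (neg_nonneg.2 hc)]
    ring

lemma fneg_of_nonneg {f : Ω → ℝ} (hf0 : ∀ ω, 0 ≤ f ω) : fneg f = 0 := by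
  funext ω; simp [fneg, max_eq_right (neg_nonpos.2 (hf0 ω))]

lemma fpos_of_nonneg {f : Ω → ℝ} (hf0 : ∀ ω, 0 ≤ f ω) : fpos f = f := by
  funext ω; simp [fpos, max_eq_left (hf0 ω)]

lemma J_of_nonneg {f} (hf0 : ∀ ω, 0 ≤ f ω) : S.J f = S.T f := by
  simp [J, fneg_of_nonneg hf0, fpos_of_nonneg hf0, S.T_zero]

lemma J_le_φ {f} (hf : f ∈ S.L) (hf0 : ∀ ω, 0 ≤ f ω) : S.J f ≤ S.φ f := by
  rw [S.J_of_nonneg hf0]; exact S.T_le_φ hf hf0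

lemma J_one : S.J (fun _ : Ω => (1:ℝ)) = S.φ (fun _ : Ω => (1:ℝ)) := by
  have h0 : ∀ ω : Ω, (0:ℝ) ≤ 1 := fun _ => zero_le_one
  rw [S.J_of_nonneg h0]
  apply le_antisymm (S.T_le_φ S.h1 h0)
  exact S.le_T S.h1 S.h1 h0 ⟨1, fun _ => le_rfl⟩ (fun _ => le_rfl)


/-! ### The bounded functions as a submodule, and the Hahn-Banach extension -/

variable (Ω) in
/-- bounded functions -/
def Vb : Submodule ℝ (Ω → ℝ) where
  carrier := {f | ∃ C, ∀ ω, |f ω| ≤ C}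
  add_mem' := by
    rintro f g ⟨C, hC⟩ ⟨D, hD⟩
    exact ⟨C + D, fun ω => (abs_add_le _ _).trans (add_le_add (hC ω) (hD ω))⟩
  zero_mem' := ⟨0, fun ω => by simp⟩
  smul_mem' := by
    rintro c f ⟨C, hC⟩
    exact ⟨|c| * C, fun ω => by
      simp only [Pi.smul_apply, smul_eq_mul, abs_mul]
      exact mul_le_mul_of_nonneg_left (hC ω) (abs_nonneg c)⟩

/-- the members of `L` that are bounded, as a submodule of `Vb`. -/
def pL : Submodule ℝ (Vb Ω) where
  carrier := {x | (x : Ω → ℝ) ∈ S.L}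
  add_mem' := by
    rintro x y hx hy
    exact S.hLadd _ hx _ hy
  zero_mem' := S.zeroL
  smul_mem' := by
    rintro c x hx
    exact S.hLsmul c _ hx

/-- φ as a linear map on `pL`. -/
noncomputable def φb : S.pL →ₗ[ℝ] ℝ where
  toFun := fun x => S.φ (x : Ω → ℝ)
  map_add' := by rintro ⟨x, hx⟩ ⟨y, hy⟩; exact S.hφadd _ hx _ hy
  map_smul' := by rintro c ⟨x, hx⟩; exact S.hφsmul c _ hx

/-- the admissible set for the dominating sublinear functional. -/
def Nset (x : Vb Ω) : Set ℝ := S.φ '' {g | g ∈ S.L ∧ ∀ ω, (x : Ω → ℝ) ω ≤ g ω}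

noncomputable def Nf (x : Vb Ω) : ℝ := sInf (S.Nset x)

lemma Nset_nonempty (x : Vb Ω) : (S.Nset x).Nonempty := by
  obtain ⟨C, hC⟩ := x.2
  exact ⟨S.φ (fun _ => C), ⟨(fun _ => C), ⟨S.constL C, fun ω => (le_abs_self _).trans (hC ω)⟩, rfl⟩⟩

lemma Nset_bddBelow (x : Vb Ω) : BddBelow (S.Nset x) := by
  obtain ⟨C, hC⟩ := x.2
  refine ⟨S.φ (fun _ => -C), ?_⟩
  rintro r ⟨g, ⟨hgL, hge⟩, rfl⟩
  exact S.φmono (S.constL (-C)) hgL fun ω =>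
    le_trans (neg_le_neg (hC ω)) (le_trans (neg_abs_le _) (hge ω))

lemma φ_le_Nf (x : S.pL) : S.φb x ≤ S.Nf x := by
  apply le_csInf (S.Nset_nonempty _)
  rintro r ⟨g, ⟨hgL, hge⟩, rfl⟩
  exact S.φmono x.2 hgL hge

lemma Nf_add (x y : Vb Ω) : S.Nf (x + y) ≤ S.Nf x + S.Nf y := by
  have h1 : ∀ a ∈ S.Nset x, ∀ b ∈ S.Nset y, S.Nf (x + y) ≤ a + b := by
    rintro a ⟨g₁, ⟨hg₁L, hg₁⟩, rfl⟩ b ⟨g₂, ⟨hg₂L, hg₂⟩, rfl⟩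
    rw [← S.hφadd _ hg₁L _ hg₂L]
    apply csInf_le (S.Nset_bddBelow _)
    exact ⟨g₁ + g₂, ⟨S.hLadd _ hg₁L _ hg₂L, fun ω => by
      have : ((x + y : Vb Ω) : Ω → ℝ) ω = (x : Ω → ℝ) ω + (y : Ω → ℝ) ω := rfl
      rw [this]; exact add_le_add (hg₁ ω) (hg₂ ω)⟩, rfl⟩
  have h2 : ∀ a ∈ S.Nset x, S.Nf (x + y) - a ≤ S.Nf y :=
    fun a ha => le_csInf (S.Nset_nonempty y) fun b hb => by
      have := h1 a ha b hb; linarith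
  have h3 : S.Nf (x + y) - S.Nf y ≤ S.Nf x :=
    le_csInf (S.Nset_nonempty x) fun a ha => by
      have := h2 a ha; linarith
  linarith

lemma Nf_smul (c : ℝ) (hc : 0 < c) (x : Vb Ω) : S.Nf (c • x) = c * S.Nf x := by
  have key1 : ∀ a ∈ S.Nset x, S.Nf (c • x) ≤ c * a := by
    rintro a ⟨g, ⟨hgL, hge⟩, rfl⟩
    rw [← S.hφsmul c _ hgL]
    apply csInf_le (S.Nset_bddBelow _)
    refine ⟨c • g, ⟨S.hLsmul c _ hgL, fun ω => ?_⟩, rfl⟩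
    have : ((c • x : Vb Ω) : Ω → ℝ) ω = c * (x : Ω → ℝ) ω := rfl
    rw [this]
    exact mul_le_mul_of_nonneg_left (hge ω) hc.le
  have key2 : ∀ a ∈ S.Nset (c • x), S.Nf x ≤ c⁻¹ * a := by
    rintro a ⟨g, ⟨hgL, hge⟩, rfl⟩
    rw [← S.hφsmul c⁻¹ _ hgL]
    apply csInf_le (S.Nset_bddBelow _)
    refine ⟨c⁻¹ • g, ⟨S.hLsmul c⁻¹ _ hgL, fun ω => ?_⟩, rfl⟩
    have h2 : ((c • x : Vb Ω) : Ω → ℝ) ω = c * (x : Ω → ℝ) ω := rfl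
    have h3 := hge ω
    rw [h2] at h3
    have : (c⁻¹ • g) ω = c⁻¹ * g ω := rfl
    rw [this, le_inv_mul_iff₀ hc]
    linarith
  apply le_antisymm
  · have : ∀ a ∈ S.Nset x, c⁻¹ * S.Nf (c • x) ≤ a := fun a ha => by
      rw [inv_mul_le_iff₀ hc]; exact key1 a ha
    have h := le_csInf (S.Nset_nonempty x) this
    calc S.Nf (c • x) = c * (c⁻¹ * S.Nf (c • x)) := by field_simp
    _ ≤ c * S.Nf x := mul_le_mul_of_nonneg_left h hc.le
  · have : ∀ a ∈ S.Nset (c • x), c * S.Nf x ≤ a := fun a ha => by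
      have := key2 a ha
      calc c * S.Nf x ≤ c * (c⁻¹ * a) := mul_le_mul_of_nonneg_left this hc.le
      _ = a := by field_simp
    exact le_csInf (S.Nset_nonempty _) this


lemma exists_Φ : ∃ Φ : Vb Ω →ₗ[ℝ] ℝ,
    (∀ x : Vb Ω, (x : Ω → ℝ) ∈ S.L → Φ x = S.φ x) ∧
    (∀ x y : Vb Ω, (∀ ω, (x : Ω → ℝ) ω ≤ (y : Ω → ℝ) ω) → Φ x ≤ Φ y) := by
  obtain ⟨g, hg1, hg2⟩ := exists_extension_of_le_sublinear ⟨S.pL, S.φb⟩ S.Nf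
    (fun c hc x => S.Nf_smul c hc x) S.Nf_add (fun x => S.φ_le_Nf x)
  refine ⟨g, fun x hx => hg1 ⟨x, hx⟩, fun x y hxy => ?_⟩
  have h1 : g (x - y) ≤ S.Nf (x - y) := hg2 _
  have h2 : S.Nf (x - y) ≤ 0 := by
    have : (0:ℝ) = S.φ 0 := S.φ0.symm
    rw [this]
    apply csInf_le (S.Nset_bddBelow _)
    refine ⟨0, ⟨S.zeroL, fun ω => ?_⟩, rfl⟩
    have : ((x - y : Vb Ω) : Ω → ℝ) ω = (x : Ω → ℝ) ω - (y : Ω → ℝ) ω := rfl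
    rw [this]
    simp [sub_nonpos.2 (hxy ω)]
  have h3 : g (x - y) = g x - g y := by rw [map_sub]
  linarith [h3 ▸ h1.trans h2]

/-- indicator function of a set as an element of `Vb`. -/
noncomputable def indVb (E : Set Ω) : Vb Ω :=
  ⟨E.indicator (fun _ => (1:ℝ)), ⟨1, fun ω => by
    rcases em (ω ∈ E) with h | h <;> simp [Set.indicator_apply, h]⟩⟩

lemma indVb_nonneg (E : Set Ω) : ∀ ω, 0 ≤ (indVb E : Ω → ℝ) ω := fun ω =>
  Set.indicator_nonneg (fun _ _ => zero_le_one) ω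

lemma indVb_le_one (E : Set Ω) : ∀ ω, (indVb E : Ω → ℝ) ω ≤ 1 := fun ω => by
  rcases em (ω ∈ E) with h | h <;> simp [indVb, Set.indicator_apply, h]

lemma indVb_empty : indVb (∅ : Set Ω) = 0 := by
  apply Subtype.ext
  funext ω
  simp [indVb]

lemma indVb_union {E F : Set Ω} (h : Disjoint E F) :
    indVb (E ∪ F) = indVb E + indVb F := by
  apply Subtype.ext
  have : ((indVb E + indVb F : Vb Ω) : Ω → ℝ) = (indVb E : Ω → ℝ) + (indVb F : Ω → ℝ) := rfl
  rw [this]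
  exact Set.indicator_union_of_disjoint h _

/-- the finitely additive measure induced by `Φ`. -/
noncomputable def mMeas (Φ : Vb Ω →ₗ[ℝ] ℝ)
    (hmono : ∀ x y : Vb Ω, (∀ ω, (x : Ω → ℝ) ω ≤ (y : Ω → ℝ) ω) → Φ x ≤ Φ y)
    (hφ1 : 0 < S.φ 1) : FinAddMeasure Ω where
  μ := fun E => Φ (indVb E) / S.φ 1
  nonneg := fun E => by
    apply div_nonneg _ hφ1.le
    have := hmono 0 (indVb E) (fun ω => indVb_nonneg E ω)
    rwa [map_zero] at this
  empty := by show Φ (indVb ∅) / S.φ 1 = 0; rw [indVb_empty, map_zero, zero_div]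
  add := fun E F h => by show Φ (indVb (E ∪ F)) / S.φ 1 = Φ (indVb E) / S.φ 1 + Φ (indVb F) / S.φ 1; rw [indVb_union h, map_add, add_div]


/-! ### generic lowerSums lemmas -/

lemma zero_mem_lowerSums {μ : Set Ω → ℝ} {f : Ω → ℝ} (hf0 : ∀ ω, 0 ≤ f ω) :
    (0:ℝ) ∈ lowerSums Set.univ μ f := by
  refine ⟨0, Fin.elim0, Fin.elim0, fun i => i.elim0, fun i => i.elim0, fun ω => ?_, ?_⟩ <;>
    simp [hf0 _]

lemma lowerSums_neg_part (w : FinAddMeasure Ω) {f : Ω → ℝ} (hf0 : ∀ ω, 0 ≤ f ω) :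
    lowerSums Set.univ w.μ (fun ω => max (-f ω) 0) = {0} := by
  apply Set.eq_singleton_iff_unique_mem.mpr
  constructor
  · exact zero_mem_lowerSums fun ω => le_max_right _ _
  · rintro r ⟨n, a, E, ha, -, hle, rfl⟩
    apply Finset.sum_eq_zero
    intro i _
    rcases Set.eq_empty_or_nonempty (E i) with he | ⟨ω, hω⟩
    · rw [he, w.empty, mul_zero]
    · have h1 : ∀ j, 0 ≤ a j * (E j).indicator (fun _ => (1:ℝ)) ω := fun j =>
        mul_nonneg (ha j) (Set.indicator_nonneg (fun _ _ => zero_le_one) ω)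
      have h2 : ∑ j, a j * (E j).indicator (fun _ => (1:ℝ)) ω ≤ 0 :=
        le_trans (hle ω) (le_of_eq (max_eq_right (neg_nonpos.2 (hf0 ω))))
      have h4 : ∀ j ∈ Finset.univ, a j * (E j).indicator (fun _ => (1:ℝ)) ω = 0 :=
        (Finset.sum_eq_zero_iff_of_nonneg (fun j _ => h1 j)).1
          (le_antisymm h2 (Finset.sum_nonneg fun j _ => h1 j))
      have h5 := h4 i (Finset.mem_univ i)
      rw [Set.indicator_of_mem hω, mul_one] at h5
      rw [h5, zero_mul]

lemma faInt_nonneg_eq (w : FinAddMeasure Ω) {g : Ω → ℝ} (hg0 : ∀ ω, 0 ≤ g ω) :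
    faInt w g = sSup (lowerSums Set.univ w.μ g) := by
  show faIntOn Set.univ w.μ g = _
  unfold faIntOn
  have e1 : (fun ω => max (g ω) 0) = g := funext fun ω => max_eq_left (hg0 ω)
  rw [e1, lowerSums_neg_part w hg0, csSup_singleton, sub_zero]

lemma coe_sum_indVb (n : ℕ) (a : Fin n → ℝ) (E : Fin n → Set Ω) (ω : Ω) :
    ((∑ i, a i • indVb (E i) : Vb Ω) : Ω → ℝ) ω
      = ∑ i, a i * (E i).indicator (fun _ => (1:ℝ)) ω := by
  rw [Submodule.coe_sum, Finset.sum_apply]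
  rfl

lemma Φ_sum_indVb (Φ : Vb Ω →ₗ[ℝ] ℝ) (n : ℕ) (a : Fin n → ℝ) (E : Fin n → Set Ω) :
    Φ (∑ i, a i • indVb (E i)) = ∑ i, a i * Φ (indVb (E i)) := by
  rw [map_sum]
  simp [map_smul]

/-! ### the representation property of `mMeas` -/

lemma m_repr (Φ : Vb Ω →ₗ[ℝ] ℝ)
    (hmono : ∀ x y : Vb Ω, (∀ ω, (x : Ω → ℝ) ω ≤ (y : Ω → ℝ) ω) → Φ x ≤ Φ y)
    (heq : ∀ x : Vb Ω, (x : Ω → ℝ) ∈ S.L → Φ x = S.φ x)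
    (hφ1 : 0 < S.φ 1) {f : Ω → ℝ} (hf : f ∈ S.L) (hf0 : ∀ ω, 0 ≤ f ω) :
    BddAbove (lowerSums Set.univ (S.mMeas Φ hmono hφ1).μ f) ∧
      sSup (lowerSums Set.univ (S.mMeas Φ hmono hφ1).μ f) = S.T f / S.φ 1 := by
  have hμ : ∀ E : Set Ω, (S.mMeas Φ hmono hφ1).μ E = Φ (indVb E) / S.φ 1 := fun E => rfl
  have hone : ((⟨fun _ => 1, ⟨1, fun ω => by simp⟩⟩ : Vb Ω) : Ω → ℝ) ∈ S.L := S.h1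
  have hΦone : Φ ⟨fun _ => 1, ⟨1, fun ω => by simp⟩⟩ = S.φ (fun _ => 1) := heq _ S.h1
  have hub : ∀ r ∈ lowerSums Set.univ (S.mMeas Φ hmono hφ1).μ f, r ≤ S.T f / S.φ 1 := by
    rintro r ⟨n, a, E, ha, -, hle, rfl⟩
    set sV : Vb Ω := ∑ i, a i • indVb (E i) with hsV
    set M : ℝ := ∑ i, a i with hM
    have hM0 : 0 ≤ M := Finset.sum_nonneg fun i _ => ha i
    set fM : Ω → ℝ := fun ω => min (f ω) M with hfM
    have hfML : fM ∈ S.L := S.minL hf (S.constL M)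
    have hfMmem : fM ∈ Vb Ω := ⟨M, fun ω => abs_le.2
      ⟨le_min (neg_nonpos.2 hM0 |>.trans (hf0 ω)) (neg_nonpos.2 hM0 |>.trans hM0),
        min_le_right _ _⟩⟩
    have hsle : ∀ ω, (sV : Ω → ℝ) ω ≤ fM ω := by
      intro ω
      rw [coe_sum_indVb]
      apply le_min (hle ω)
      calc ∑ i, a i * (E i).indicator (fun _ => (1:ℝ)) ω
          ≤ ∑ i, a i := Finset.sum_le_sum fun i _ => by
            have h1 := indVb_le_one (E i) ω
            have h2 : (indVb (E i) : Ω → ℝ) ω = (E i).indicator (fun _ => (1:ℝ)) ω := rfl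
            rw [h2] at h1
            calc a i * (E i).indicator (fun _ => (1:ℝ)) ω ≤ a i * 1 :=
              mul_le_mul_of_nonneg_left h1 (ha i)
            _ = a i := mul_one _
      _ = M := rfl
    have hΦs : Φ sV ≤ S.T f := by
      calc Φ sV ≤ Φ ⟨fM, hfMmem⟩ := hmono _ _ hsle
      _ = S.φ fM := heq _ hfML
      _ ≤ S.T f := S.le_T hf hfML (fun ω => le_min (hf0 ω) hM0)
          ⟨M, fun ω => min_le_right _ _⟩ (fun ω => min_le_left _ _)
    have hr : ∑ i, a i * (S.mMeas Φ hmono hφ1).μ (E i) = Φ sV / S.φ 1 := by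
      rw [hsV, Φ_sum_indVb, Finset.sum_div]
      congr 1
      funext i
      rw [hμ, mul_div_assoc]
    rw [hr]
    gcongr
  have hbdd : BddAbove (lowerSums Set.univ (S.mMeas Φ hmono hφ1).μ f) := ⟨_, hub⟩
  refine ⟨hbdd, le_antisymm (csSup_le ⟨0, zero_mem_lowerSums hf0⟩ hub) ?_⟩
  -- lower bound: T f / φ1 ≤ sSup
  rw [div_le_iff₀ hφ1, mul_comm]
  apply csSup_le ⟨0, S.zero_mem_Tset hf0⟩
  rintro r ⟨h, ⟨hhL, hh0, ⟨C, hC⟩, hlef⟩, rfl⟩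
  -- show φ h ≤ φ1 * sSup, by ε-approximation
  by_contra hcon
  push_neg at hcon
  set ε : ℝ := (S.φ h - S.φ 1 * sSup (lowerSums Set.univ (S.mMeas Φ hmono hφ1).μ f)) /
      (2 * S.φ 1) with hε
  have hεpos : 0 < ε := by
    apply div_pos (by linarith) (by linarith)
  -- construct the step function
  set n : ℕ := ⌈C / ε⌉₊ with hn
  set Es : Fin n → Set Ω := fun i => {ω | ((i:ℕ)+1 : ℝ) * ε ≤ h ω} with hEs
  set sV : Vb Ω := ∑ i, ε • indVb (Es i) with hsV
  have hsval : ∀ ω, (sV : Ω → ℝ) ω = ε * (min (⌊h ω / ε⌋₊) n : ℕ) := by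
    intro ω
    rw [hsV, coe_sum_indVb]
    set K : ℕ := ⌊h ω / ε⌋₊ with hK
    have hind : ∀ i : Fin n, (Es i).indicator (fun _ => (1:ℝ)) ω
        = if (i:ℕ) < K then 1 else 0 := by
      intro i
      have : ω ∈ Es i ↔ (i:ℕ) < K := by
        rw [hEs]
        simp only [Set.mem_setOf_eq]
        rw [show ((i:ℕ) < K ↔ (i:ℕ)+1 ≤ K) from Nat.lt_iff_add_one_le,
          Nat.le_floor_iff (div_nonneg (hh0 ω) hεpos.le), le_div_iff₀ hεpos]
        push_cast
        rfl
      rcases em (ω ∈ Es i) with hmem | hmem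
      · rw [Set.indicator_of_mem hmem, if_pos (this.1 hmem)]
      · rw [Set.indicator_of_notMem hmem, if_neg (fun hh => hmem (this.2 hh))]
    calc ∑ i, ε * (Es i).indicator (fun _ => (1:ℝ)) ω
        = ∑ i : Fin n, ε * if (i:ℕ) < K then 1 else 0 := by
          apply Finset.sum_congr rfl
          intro i _
          rw [hind i]
    _ = ε * ∑ i : Fin n, if (i:ℕ) < K then (1:ℝ) else 0 := by rw [Finset.mul_sum]
    _ = ε * ∑ i ∈ Finset.range n, if i < K then (1:ℝ) else 0 := by
          rw [Fin.sum_univ_eq_sum_range (fun i => if i < K then (1:ℝ) else 0) n]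
    _ = ε * ((Finset.range n).filter (fun i => i < K)).card := by rw [Finset.sum_boole]
    _ = ε * (min K n : ℕ) := by
          congr 2
          have : (Finset.range n).filter (fun i => i < K) = Finset.range (min K n) := by
            ext x
            simp [Nat.lt_min, and_comm]
          rw [this, Finset.card_range]
  have hs_le_h : ∀ ω, (sV : Ω → ℝ) ω ≤ h ω := by
    intro ω
    rw [hsval ω]
    set K : ℕ := ⌊h ω / ε⌋₊ with hK
    calc ε * (min K n : ℕ) ≤ ε * K := by
          apply mul_le_mul_of_nonneg_left _ hεpos.le
          exact_mod_cast Nat.cast_le.2 (min_le_left _ _)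
    _ ≤ h ω := by
          rw [mul_comm, ← le_div_iff₀ hεpos]
          exact Nat.floor_le (div_nonneg (hh0 ω) hεpos.le)
  have hh_le_s : ∀ ω, h ω ≤ (sV : Ω → ℝ) ω + ε := by
    intro ω
    rw [hsval ω]
    set K : ℕ := ⌊h ω / ε⌋₊ with hK
    rcases lt_or_ge K n with hKn | hKn
    · rw [min_eq_left hKn.le]
      have h1 : h ω / ε < K + 1 := Nat.lt_floor_add_one _
      rw [div_lt_iff₀ hεpos] at h1
      push_cast at h1 ⊢
      nlinarith
    · rw [min_eq_right hKn]
      have h1 : (C / ε : ℝ) ≤ n := Nat.le_ceil _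
      rw [div_le_iff₀ hεpos] at h1
      have h2 := hC ω
      have h3 : (0:ℝ) ≤ ε := hεpos.le
      nlinarith
  -- sV gives a lower sum for f
  have hmem : ∑ i, ε * (S.mMeas Φ hmono hφ1).μ (Es i)
      ∈ lowerSums Set.univ (S.mMeas Φ hmono hφ1).μ f := by
    refine ⟨n, fun _ => ε, Es, fun _ => hεpos.le, fun _ => Set.mem_univ _, fun ω => ?_, rfl⟩
    refine le_trans ?_ (hlef ω)
    rw [← coe_sum_indVb n (fun _ => ε) Es ω]
    exact hs_le_h ω
  have hr_le : ∑ i, ε * (S.mMeas Φ hmono hφ1).μ (Es i)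
      ≤ sSup (lowerSums Set.univ (S.mMeas Φ hmono hφ1).μ f) := le_csSup hbdd hmem
  have hrval : Φ sV = S.φ 1 * ∑ i, ε * (S.mMeas Φ hmono hφ1).μ (Es i) := by
    rw [hsV, Φ_sum_indVb, Finset.mul_sum]
    apply Finset.sum_congr rfl
    intro i _
    rw [hμ]
    field_simp
  have hCbound : h ∈ Vb Ω := ⟨max C 0, fun ω => abs_le.2
    ⟨le_trans (neg_nonpos.2 (le_max_right _ _)) (hh0 ω), le_trans (hC ω) (le_max_left _ _)⟩⟩
  set oneV : Vb Ω := ⟨fun _ => 1, ⟨1, fun ω => by simp⟩⟩ with honeV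
  have hmono2 : S.φ h ≤ Φ sV + ε * S.φ 1 := by
    have h1 : Φ ⟨h, hCbound⟩ ≤ Φ (sV + ε • oneV) := by
      apply hmono
      intro ω
      have h2 : ((sV + ε • oneV : Vb Ω) : Ω → ℝ) ω = (sV : Ω → ℝ) ω + ε * 1 := rfl
      rw [h2, mul_one]
      exact hh_le_s ω
    rw [map_add, map_smul, smul_eq_mul, heq _ hhL, hΦone] at h1
    have hone1 : S.φ (fun _ : Ω => (1:ℝ)) = S.φ 1 := rfl
    rw [hone1] at h1
    exact h1
  have hΦle : Φ sV ≤ S.φ 1 * sSup (lowerSums Set.univ (S.mMeas Φ hmono hφ1).μ f) := by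
    rw [hrval]
    exact mul_le_mul_of_nonneg_left hr_le hφ1.le
  have hε2 : ε * (2 * S.φ 1)
      = S.φ h - S.φ 1 * sSup (lowerSums Set.univ (S.mMeas Φ hmono hφ1).μ f) := by
    rw [hε]
    exact div_mul_cancel₀ _ (by positivity)
  linarith


/-! ### uniqueness side: any representing measure yields the same integral -/

lemma ψ_bounded_zero (ψp : (Ω → ℝ) → ℝ)
    (hψadd : ∀ f ∈ S.L, ∀ g ∈ S.L, ψp (f + g) = ψp f + ψp g)
    (hψsmul : ∀ c : ℝ, ∀ f ∈ S.L, ψp (c • f) = c * ψp f)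
    (hψpos : ∀ f ∈ S.L, (∀ ω, 0 ≤ f ω) → 0 ≤ ψp f)
    (hψ1 : ψp (fun _ => (1:ℝ)) = 0)
    {f} (hf : f ∈ S.L) {C : ℝ} (hb : ∀ ω, |f ω| ≤ C) : ψp f = 0 := by
  set g : Ω → ℝ := fun _ => max C 0 with hg
  have hgL : g ∈ S.L := S.constL _
  have hgψ : ψp g = 0 := by
    have h1 : g = (max C 0) • (fun _ => (1:ℝ)) := by funext ω; simp [hg]
    rw [h1, hψsmul _ _ S.h1, hψ1, mul_zero]
  have h2 : 0 ≤ ψp (g + f) := by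
    apply hψpos _ (S.hLadd _ hgL _ hf)
    intro ω
    have hab := abs_le.1 (hb ω)
    have h3 : (g + f) ω = max C 0 + f ω := rfl
    rw [h3]
    have h5 : C ≤ max C 0 := le_max_left _ _
    linarith [hab.1]
  have h4 : 0 ≤ ψp (g + (-1 : ℝ) • f) := by
    apply hψpos _ (S.hLadd _ hgL _ (S.hLsmul _ _ hf))
    intro ω
    have hab := abs_le.1 (hb ω)
    have h3 : (g + (-1:ℝ) • f) ω = max C 0 + (-1) * f ω := rfl
    rw [h3]
    have h5 : C ≤ max C 0 := le_max_left _ _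
    linarith [hab.2]
  rw [hψadd _ hgL _ hf, hgψ, zero_add] at h2
  rw [hψadd _ hgL _ (S.hLsmul _ _ hf), hgψ, zero_add, hψsmul _ _ hf] at h4
  linarith

lemma v_bddAbove (v : FinAddMeasure Ω) (hvint : ∀ g ∈ S.L, FAIntegrable v g)
    {g} (hg : g ∈ S.L) (hg0 : ∀ ω, 0 ≤ g ω) : BddAbove (lowerSums Set.univ v.μ g) := by
  have h := (hvint g hg).1
  have e : (fun ω => max (g ω) 0) = g := funext fun ω => max_eq_left (hg0 ω)
  rwa [e] at h

lemma v_repr (v : FinAddMeasure Ω) (ψp : (Ω → ℝ) → ℝ)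
    (hψadd : ∀ f ∈ S.L, ∀ g ∈ S.L, ψp (f + g) = ψp f + ψp g)
    (hψsmul : ∀ c : ℝ, ∀ f ∈ S.L, ψp (c • f) = c * ψp f)
    (hψpos : ∀ f ∈ S.L, (∀ ω, 0 ≤ f ω) → 0 ≤ ψp f)
    (hψ1 : ψp (fun _ => (1:ℝ)) = 0)
    (hvint : ∀ g ∈ S.L, FAIntegrable v g)
    (hdec : ∀ g ∈ S.L, S.φ g = S.φ (fun _ => (1:ℝ)) * faInt v g + ψp g)
    (hφ1 : 0 < S.φ 1) {f} (hf : f ∈ S.L) (hf0 : ∀ ω, 0 ≤ f ω) :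
    S.φ 1 * sSup (lowerSums Set.univ v.μ f) = S.T f := by
  have hone : S.φ (fun _ : Ω => (1:ℝ)) = S.φ 1 := rfl
  have htrunc0 : ∀ n : ℕ, ∀ ω, 0 ≤ trunc f n ω := fun n ω =>
    le_min (hf0 ω) (Nat.cast_nonneg n)
  have htrunc_eq : ∀ n : ℕ, S.φ (trunc f n)
      = S.φ 1 * sSup (lowerSums Set.univ v.μ (trunc f n)) := by
    intro n
    have h1 := hdec (trunc f n) (S.truncL hf n)
    have h2 : ψp (trunc f n) = 0 := by
      apply S.ψ_bounded_zero ψp hψadd hψsmul hψpos hψ1 (S.truncL hf n) (C := n)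
      intro ω
      exact abs_le.2 ⟨le_trans (neg_nonpos.2 (Nat.cast_nonneg n)) (htrunc0 n ω),
        min_le_right _ _⟩
    rw [h2, add_zero, faInt_nonneg_eq v (htrunc0 n), hone] at h1
    exact h1
  have hbdd := S.v_bddAbove v hvint hf hf0
  apply le_antisymm
  · -- φ1 * sSup ≤ T f
    have hs : sSup (lowerSums Set.univ v.μ f) ≤ S.T f / S.φ 1 := by
      apply csSup_le ⟨0, zero_mem_lowerSums hf0⟩
      rintro r ⟨n, a, E, ha, -, hle, rfl⟩
      set M : ℝ := ∑ i, a i with hM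
      have hM0 : 0 ≤ M := Finset.sum_nonneg fun i _ => ha i
      set nn : ℕ := ⌈M⌉₊ with hnn
      have hmem2 : ∑ i, a i * v.μ (E i) ∈ lowerSums Set.univ v.μ (trunc f nn) := by
        refine ⟨n, a, E, ha, fun _ => Set.mem_univ _, fun ω => ?_, rfl⟩
        apply le_min (hle ω)
        calc ∑ i, a i * (E i).indicator (fun _ => (1:ℝ)) ω ≤ ∑ i, a i := by
              apply Finset.sum_le_sum
              intro i _
              rcases em (ω ∈ E i) with h | h <;>
                simp [Set.indicator_apply, h, ha i]
        _ ≤ (nn : ℝ) := Nat.le_ceil M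
      have h3 : ∑ i, a i * v.μ (E i) ≤ sSup (lowerSums Set.univ v.μ (trunc f nn)) :=
        le_csSup (S.v_bddAbove v hvint (S.truncL hf nn) (htrunc0 nn)) hmem2
      have h4 : S.φ 1 * sSup (lowerSums Set.univ v.μ (trunc f nn)) ≤ S.T f :=
        (htrunc_eq nn) ▸ S.trunc_mem_le_T hf hf0 nn
      rw [le_div_iff₀ hφ1]
      calc (∑ i, a i * v.μ (E i)) * S.φ 1
          = S.φ 1 * ∑ i, a i * v.μ (E i) := mul_comm _ _
      _ ≤ S.φ 1 * sSup (lowerSums Set.univ v.μ (trunc f nn)) :=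
          mul_le_mul_of_nonneg_left h3 hφ1.le
      _ ≤ S.T f := h4
    calc S.φ 1 * sSup (lowerSums Set.univ v.μ f) ≤ S.φ 1 * (S.T f / S.φ 1) :=
        mul_le_mul_of_nonneg_left hs hφ1.le
    _ = S.T f := by field_simp
  · -- T f ≤ φ1 * sSup
    apply S.T_le_of_trunc hf hf0
    intro n
    rw [htrunc_eq n]
    apply mul_le_mul_of_nonneg_left _ hφ1.le
    apply csSup_le_csSup hbdd ⟨0, zero_mem_lowerSums (htrunc0 n)⟩
    rintro r ⟨k, a, E, ha, -, hle, rfl⟩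
    exact ⟨k, a, E, ha, fun _ => Set.mem_univ _,
      fun ω => le_trans (hle ω) (min_le_left _ _), rfl⟩

end RieszSetup

/-- Riesz decomposition: for a positive linear functional `φ`
on a vector sublattice `L ⊆ ℝ^Ω` with `1 ∈ L`, there are `m ∈ ba₊` with
`L ⊆ L(m)` and a unique positive linear `φ⊥` on `L` with `φ⊥(1) = 0` such
that `φ(f) = φ(1)·m(f) + φ⊥(f)` for all `f ∈ L` (unique among those admitting
such a decomposition with some positive representing measure). -/
theorem riesz_decomposition {Ω : Type*} [Nonempty Ω]
    (L : Set (Ω → ℝ))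
    (hLadd : ∀ f ∈ L, ∀ g ∈ L, f + g ∈ L)
    (hLsmul : ∀ (c : ℝ), ∀ f ∈ L, c • f ∈ L)
    (hLsup : ∀ f ∈ L, ∀ g ∈ L, (fun ω => max (f ω) (g ω)) ∈ L)
    (h1 : (fun _ => (1 : ℝ)) ∈ L)
    (φ : (Ω → ℝ) → ℝ)
    (hφadd : ∀ f ∈ L, ∀ g ∈ L, φ (f + g) = φ f + φ g)
    (hφsmul : ∀ (c : ℝ), ∀ f ∈ L, φ (c • f) = c * φ f)
    (hφpos : ∀ f ∈ L, (∀ ω, 0 ≤ f ω) → 0 ≤ φ f) :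
    ∃ φp : (Ω → ℝ) → ℝ,
      ((∀ f ∈ L, ∀ g ∈ L, φp (f + g) = φp f + φp g) ∧
       (∀ (c : ℝ), ∀ f ∈ L, φp (c • f) = c * φp f) ∧
       (∀ f ∈ L, (∀ ω, 0 ≤ f ω) → 0 ≤ φp f) ∧
       φp (fun _ => (1 : ℝ)) = 0) ∧
      (∃ m : FinAddMeasure Ω, (∀ f ∈ L, FAIntegrable m f) ∧
        ∀ f ∈ L, φ f = φ (fun _ => (1 : ℝ)) * faInt m f + φp f) ∧
      (∀ ψp : (Ω → ℝ) → ℝ,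
        ((∀ f ∈ L, ∀ g ∈ L, ψp (f + g) = ψp f + ψp g) ∧
         (∀ (c : ℝ), ∀ f ∈ L, ψp (c • f) = c * ψp f) ∧
         (∀ f ∈ L, (∀ ω, 0 ≤ f ω) → 0 ≤ ψp f) ∧
         ψp (fun _ => (1 : ℝ)) = 0) →
        (∃ v : FinAddMeasure Ω, (∀ f ∈ L, FAIntegrable v f) ∧
          ∀ f ∈ L, φ f = φ (fun _ => (1 : ℝ)) * faInt v f + ψp f) →
        ∀ f ∈ L, ψp f = φp f) := by
  set S : RieszSetup Ω := ⟨L, φ, hLadd, hLsmul, hLsup, h1, hφadd, hφsmul, hφpos⟩ with hS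
  have hone : φ (fun _ : Ω => (1:ℝ)) = S.φ 1 := rfl
  have hφ1nn : 0 ≤ S.φ 1 := S.hφpos _ S.h1 (fun _ => zero_le_one)
  rcases eq_or_lt_of_le hφ1nn with hzero | hpos
  · -- trivial case φ(1) = 0
    have hz : φ (fun _ : Ω => (1:ℝ)) = 0 := by rw [hone, ← hzero]
    refine ⟨φ, ⟨hφadd, hφsmul, hφpos, hz⟩,
      ⟨⟨fun _ => 0, fun _ => le_rfl, rfl, fun _ _ _ => (zero_add (0:ℝ)).symm⟩, ?_, ?_⟩, ?_⟩
    · intro f hf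
      constructor <;>
      · refine ⟨0, ?_⟩
        rintro r ⟨n, a, E, -, -, -, rfl⟩
        simp
    · intro f hf
      rw [hz, zero_mul, zero_add]
    · rintro ψp ⟨hψadd, hψsmul, hψpos, hψ1⟩ ⟨v, hvint, hdecv⟩ f hf
      have hd := hdecv f hf
      rw [hz, zero_mul, zero_add] at hd
      exact hd.symm
  · -- main case φ(1) > 0
    obtain ⟨Φ, heq, hmono⟩ := S.exists_Φ
    refine ⟨fun g => S.φ g - S.J g, ⟨?_, ?_, ?_, ?_⟩,
      ⟨S.mMeas Φ hmono hpos, ?_, ?_⟩, ?_⟩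
    · intro f hf g hg
      show S.φ (f + g) - S.J (f + g) = (S.φ f - S.J f) + (S.φ g - S.J g)
      rw [S.hφadd f hf g hg, S.J_add hf hg]
      ring
    · intro c f hf
      show S.φ (c • f) - S.J (c • f) = c * (S.φ f - S.J f)
      rw [S.hφsmul c f hf, S.J_smul hf c]
      ring
    · intro f hf hf0
      exact sub_nonneg.2 (S.J_le_φ hf hf0)
    · show S.φ (fun _ : Ω => (1:ℝ)) - S.J (fun _ : Ω => (1:ℝ)) = 0
      rw [S.J_one]
      ring
    · intro f hf
      exact ⟨(S.m_repr Φ hmono heq hpos (S.fposL hf) (RieszSetup.fpos_nonneg f)).1,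
        (S.m_repr Φ hmono heq hpos (S.fnegL hf) (RieszSetup.fneg_nonneg f)).1⟩
    · intro f hf
      have hfa : faInt (S.mMeas Φ hmono hpos) f
          = (S.T (RieszSetup.fpos f) - S.T (RieszSetup.fneg f)) / S.φ 1 := by
        show faIntOn Set.univ _ f = _
        unfold faIntOn
        change sSup (lowerSums Set.univ (S.mMeas Φ hmono hpos).μ (RieszSetup.fpos f)) -
          sSup (lowerSums Set.univ (S.mMeas Φ hmono hpos).μ (RieszSetup.fneg f)) = _
        rw [(S.m_repr Φ hmono heq hpos (S.fposL hf) (RieszSetup.fpos_nonneg f)).2,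
          (S.m_repr Φ hmono heq hpos (S.fnegL hf) (RieszSetup.fneg_nonneg f)).2,
          div_sub_div_same]
      rw [hfa, hone]
      have h2 : S.φ 1 * ((S.T (RieszSetup.fpos f) - S.T (RieszSetup.fneg f)) / S.φ 1)
          = S.J f := by
        rw [mul_comm, div_mul_cancel₀ _ hpos.ne']
        rfl
      rw [h2]
      show S.φ f = S.J f + (S.φ f - S.J f)
      ring
    · rintro ψp ⟨hψadd, hψsmul, hψpos, hψ1⟩ ⟨v, hvint, hdecv⟩ f hf
      have h1 := S.v_repr v ψp hψadd hψsmul hψpos hψ1 hvint hdecv hpos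
        (S.fposL hf) (RieszSetup.fpos_nonneg f)
      have h2 := S.v_repr v ψp hψadd hψsmul hψpos hψ1 hvint hdecv hpos
        (S.fnegL hf) (RieszSetup.fneg_nonneg f)
      have hfa : faInt v f
          = (S.T (RieszSetup.fpos f) - S.T (RieszSetup.fneg f)) / S.φ 1 := by
        show faIntOn Set.univ _ f = _
        unfold faIntOn
        change sSup (lowerSums Set.univ v.μ (RieszSetup.fpos f)) -
          sSup (lowerSums Set.univ v.μ (RieszSetup.fneg f)) = _
        have h1' : sSup (lowerSums Set.univ v.μ (RieszSetup.fpos f))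
            = S.T (RieszSetup.fpos f) / S.φ 1 := by
          rw [eq_div_iff hpos.ne']
          linarith [h1]
        have h2' : sSup (lowerSums Set.univ v.μ (RieszSetup.fneg f))
            = S.T (RieszSetup.fneg f) / S.φ 1 := by
          rw [eq_div_iff hpos.ne']
          linarith [h2]
        rw [h1', h2', div_sub_div_same]
      have hd := hdecv f hf
      rw [hfa, hone] at hd
      have h3 : S.φ 1 * ((S.T (RieszSetup.fpos f) - S.T (RieszSetup.fneg f)) / S.φ 1)
          = S.J f := by
        rw [mul_comm, div_mul_cancel₀ _ hpos.ne']
        rfl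
      rw [h3] at hd
      show ψp f = S.φ f - S.J f
      linarith [hd]
end

section
/- Let L be a Banach lattice containing the constants (a sublattice of ℝ^Ω with sup-compatible norm) and φ : L → ℝ a monotone functional satisfying lim_n inf{φ(n·f) : f ∈ L, φ(f) > η} = ∞ for every η > 0. Then limsup_n φ(h_n) ≤ 0 whenever (h_n) converges to 0 in norm. In particular, every convex monotone real-valued functional on a Banach lattice is continuous. -/
open Filter

/-- Auxiliary: for a sequence with geometrically small norms in a Banach
lattice, there is a single upper bound dominating `n • x n` and `x n`. -/
lemma exists_dominating_bound {E : Type*} [NormedAddCommGroup E] [Lattice E] [HasSolidNorm E] [IsOrderedAddMonoid E] [CompleteSpace E]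
    (x : ℕ → E) (hx : ∀ n, ‖x n‖ ≤ (1/2) ^ n) :
    ∃ g : E, (∀ n : ℕ, x n ≤ g) ∧ (∀ n : ℕ, n • x n ≤ g) := by
  have hsumR : Summable (fun n : ℕ => ((n : ℝ) + 1) * (1/2) ^ n) := by
    have h1 := summable_pow_mul_geometric_of_norm_lt_one (R := ℝ) 1 (r := 1/2) (by norm_num)
    have h2 : Summable (fun n : ℕ => ((1:ℝ)/2) ^ n) :=
      summable_geometric_of_lt_one (by norm_num) (by norm_num)
    simpa [add_mul, pow_one] using h1.add h2
  set y : ℕ → E := fun n => (n + 1) • |x n| with hy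
  have hynorm : ∀ n, ‖y n‖ ≤ ((n : ℝ) + 1) * (1/2) ^ n := by
    intro n
    have h1 : ‖y n‖ ≤ ((n : ℝ) + 1) * ‖x n‖ := by
      have : ‖(n + 1) • |x n|‖ ≤ ((n + 1 : ℕ) : ℝ) * ‖|x n|‖ := norm_nsmul_le
      rw [norm_abs_eq_norm] at this
      calc ‖y n‖ ≤ ((n + 1 : ℕ) : ℝ) * ‖x n‖ := by exact_mod_cast this
        _ = ((n : ℝ) + 1) * ‖x n‖ := by push_cast; ring
    have h0 : (0:ℝ) ≤ (n : ℝ) + 1 := by positivity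
    nlinarith [norm_nonneg (x n), hx n]
  have hsum : Summable y := by
    refine Summable.of_norm_bounded hsumR hynorm
  have hynonneg : ∀ n, 0 ≤ y n := fun n =>
    nsmul_nonneg (abs_nonneg (x n)) (n + 1)
  refine ⟨∑' n, y n, ?_, ?_⟩
  · intro n
    have h1 : x n ≤ y n := by
      calc x n ≤ |x n| := le_abs_self _
        _ = 1 • |x n| := (one_smul ℕ _).symm
        _ ≤ (n + 1) • |x n| := nsmul_le_nsmul_left (abs_nonneg _) (by omega)
    exact h1.trans (Summable.le_tsum hsum n fun j _ => hynonneg j)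
  · intro n
    have h1 : n • x n ≤ y n := by
      calc n • x n ≤ n • |x n| := nsmul_le_nsmul_right (le_abs_self _) n
        _ ≤ (n + 1) • |x n| := nsmul_le_nsmul_left (abs_nonneg _) (by omega)
    exact h1.trans (Summable.le_tsum hsum n fun j _ => hynonneg j)

/-- on a Banach lattice `E`, a monotone functional `φ`
satisfying the pseudo-homogeneity condition
`lim_n inf {φ(n•f) : φ(f) > η} = ∞` for every `η > 0` has
`limsup_n φ(h_n) ≤ 0` whenever `h_n → 0` in norm; in particular every
convex monotone real functional on a Banach lattice is continuous. -/
theorem banach_lattice_monotone_upper_semicontinuity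
    {E : Type*} [NormedAddCommGroup E] [Lattice E] [HasSolidNorm E] [IsOrderedAddMonoid E] [NormedSpace ℝ E] [CompleteSpace E]
    (φ : E → ℝ) (hmono : Monotone φ)
    (hpseudo : ∀ η : ℝ, 0 < η → ∀ M : ℝ, ∃ N : ℕ, ∀ n ≥ N, ∀ f : E,
        η < φ f → M ≤ φ (n • f)) :
    (∀ h : ℕ → E, Tendsto h atTop (nhds 0) →
      ∀ ε : ℝ, 0 < ε → ∀ᶠ n in atTop, φ (h n) < ε) ∧
    (∀ ψ : E → ℝ, Monotone ψ → ConvexOn ℝ Set.univ ψ → Continuous ψ) := by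
  constructor
  · intro h hh ε hε
    by_contra hcon
    have hfreq : ∃ᶠ n in atTop, ε ≤ φ (h n) := by
      rw [Filter.frequently_atTop]
      simp only [not_eventually, not_lt] at hcon
      rw [Filter.frequently_atTop] at hcon
      exact hcon
    -- pick for each k an index with small norm and large φ
    have hpick : ∀ k : ℕ, ∃ x : E, ‖x‖ ≤ (1/2) ^ k ∧ ε ≤ φ x := by
      intro k
      have hev : ∀ᶠ n in atTop, ‖h n‖ ≤ (1/2) ^ k := by
        have h0 : Tendsto (fun n => ‖h n‖) atTop (nhds 0) := by simpa using hh.norm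
        have h2 : (0:ℝ) < (1/2) ^ k := by positivity
        exact h0.eventually (eventually_le_nhds h2)
      obtain ⟨n, hn1, hn2⟩ := (hfreq.and_eventually hev).exists
      exact ⟨h n, hn2, hn1⟩
    choose x hxnorm hxφ using hpick
    obtain ⟨g, -, hg⟩ := exists_dominating_bound x hxnorm
    obtain ⟨N, hN⟩ := hpseudo (ε/2) (by linarith) (φ g + 1)
    have h1 : φ g + 1 ≤ φ (N • x N) := hN N le_rfl (x N) (by linarith [hxφ N])
    have h2 : φ (N • x N) ≤ φ g := hmono (hg N)
    linarith
  · intro ψ hψmono hψconv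
    -- ψ is bounded above near 0
    have hbdd : (nhds (0 : E)).IsBoundedUnder (· ≤ ·) ψ := by
      by_contra hcon
      have hfreq : ∀ b : ℝ, ∃ᶠ z in nhds (0 : E), b < ψ z := by
        intro b
        by_contra hb
        exact hcon ⟨b, by simpa [not_frequently, not_lt] using hb⟩
      have hpick : ∀ k : ℕ, ∃ x : E, ‖x‖ ≤ (1/2) ^ k ∧ (k : ℝ) < ψ x := by
        intro k
        have hev : ∀ᶠ z in nhds (0 : E), ‖z‖ ≤ (1/2) ^ k := by
          have h2 : (0:ℝ) < (1/2) ^ k := by positivity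
          filter_upwards [Metric.closedBall_mem_nhds (0:E) h2] with z hz
          simpa using Metric.mem_closedBall.mp hz
        obtain ⟨z, hz1, hz2⟩ := ((hfreq k).and_eventually hev).exists
        exact ⟨z, hz2, hz1⟩
      choose x hxnorm hxψ using hpick
      obtain ⟨g, hg, -⟩ := exists_dominating_bound x hxnorm
      obtain ⟨k, hk⟩ := exists_nat_gt (ψ g)
      have : ψ (x k) ≤ ψ g := hψmono (hg k)
      have := hxψ k
      linarith
    have htfae := hψconv.continuousOn_tfae isOpen_univ ⟨0, Set.mem_univ 0⟩
    have h4 : ∃ x₀ ∈ Set.univ, IsBoundedUnder (· ≤ ·) (nhds x₀) ψ :=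
      ⟨0, Set.mem_univ 0, hbdd⟩
    have hcont : ContinuousOn ψ Set.univ := (htfae.out 3 1).mp h4
    exact continuousOn_univ.mp hcont
end
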